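/- arXiv:1301.7464 — 3 statements merged into one kernel-verified Lean document; each statement's English description precedes it below -/
import Mathlib

section
/- There exists a finite constant a, depending only on P_X and W, such that for every real γ ≥ 0, Σ_{n=0}^∞ E[exp(−[S_n − γ]^+)] ≤ γ/C + a. -/
open MeasureTheory ProbabilityTheory

/-- Output marginal `P_Y(y) = Σ_x P_X(x) W(y|x)`. -/
noncomputable def outDist {𝒳 𝒴 : Type*} [Fintype 𝒳] (pX : 𝒳 → ℝ) (W : 𝒳 → 𝒴 → ℝ)
    (y : 𝒴) : ℝ := ∑ x, pX x * W x y

/-- Information density `i(x;y) = log (W(y|x) / P_Y(y))`. -/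
noncomputable def infoDen {𝒳 𝒴 : Type*} [Fintype 𝒳] (pX : 𝒳 → ℝ) (W : 𝒳 → 𝒴 → ℝ)
    (x : 𝒳) (y : 𝒴) : ℝ := Real.log (W x y / outDist pX W y)

/-- There is a finite constant `a` (depending only on `P_X` and `W`)
such that for every real `γ ≥ 0`, `Σ_{n=0}^∞ E[exp(−[Sₙ − γ]⁺)] ≤ γ/C + a`. -/
theorem stmt13 {𝒳 𝒴 : Type*} [Fintype 𝒳] [Nonempty 𝒳] [Fintype 𝒴] [Nonempty 𝒴]
    [MeasurableSpace 𝒳] [DiscreteMeasurableSpace 𝒳]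
    [MeasurableSpace 𝒴] [DiscreteMeasurableSpace 𝒴]
    (pX : 𝒳 → ℝ) (hpXpos : ∀ x, 0 < pX x) (hpXsum : ∑ x, pX x = 1)
    (W : 𝒳 → 𝒴 → ℝ) (hWpos : ∀ x y, 0 < W x y) (hWsum : ∀ x, ∑ y, W x y = 1)
    (C : ℝ) (hCdef : C = ∑ x, ∑ y, pX x * W x y * infoDen pX W x y)
    -- `P_{XY} ≠ P_X ⊗ P_Y`, equivalently `C > 0`:
    (hC : 0 < C)
    {Ω : Type*} [MeasurableSpace Ω] (μ : Measure Ω) [IsProbabilityMeasure μ]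
    (X : ℕ → Ω → 𝒳) (Y : ℕ → Ω → 𝒴)
    (hXm : ∀ k, Measurable (X k)) (hYm : ∀ k, Measurable (Y k))
    -- `((X_k, Y_k))_k` is an i.i.d. sequence with law `P_{XY}`:
    (hXYindep : iIndepFun (fun k ω => (X k ω, Y k ω)) μ)
    (hXYlaw : ∀ k x y, μ {ω | X k ω = x ∧ Y k ω = y} = ENNReal.ofReal (pX x * W x y)) :
    ∃ a : ℝ, ∀ γ : ℝ, 0 ≤ γ →
      Summable (fun n : ℕ => ∫ ω, Real.exp (-(max
          ((∑ k ∈ Finset.range n, infoDen pX W (X k ω) (Y k ω)) - γ) 0)) ∂μ)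
      ∧ ∑' n : ℕ, (∫ ω, Real.exp (-(max
            ((∑ k ∈ Finset.range n, infoDen pX W (X k ω) (Y k ω)) - γ) 0)) ∂μ)
          ≤ γ / C + a := by
  classical
  set Z : ℕ → Ω → ℝ := fun k ω => infoDen pX W (X k ω) (Y k ω) with hZdef
  set S : ℕ → Ω → ℝ := fun n ω => ∑ k ∈ Finset.range n, Z k ω with hSdef
  -- basic measurability
  have hgm : Measurable (fun p : 𝒳 × 𝒴 => infoDen pX W p.1 p.2) := measurable_of_countable _
  have hVm : ∀ k, Measurable (fun ω => (X k ω, Y k ω)) := fun k => (hXm k).prodMk (hYm k)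
  have hZm : ∀ k, Measurable (Z k) := fun k => hgm.comp (hVm k)
  have hSm : ∀ n, Measurable (S n) := fun n => Finset.measurable_sum _ (fun k _ => hZm k)
  -- integrability from boundedness
  have intb : ∀ (f : Ω → ℝ) (c : ℝ), Measurable f → (∀ ω, |f ω| ≤ c) → Integrable f μ := by
    intro f c hf hb
    refine (integrable_const c).mono' hf.aestronglyMeasurable (Filter.Eventually.of_forall ?_)
    intro ω; simpa [Real.norm_eq_abs] using hb ω
  -- the bound B on |infoDen|
  set B : ℝ := ∑ x, ∑ y, |infoDen pX W x y| with hBdef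
  have hBb : ∀ x y, |infoDen pX W x y| ≤ B := by
    intro x y
    calc |infoDen pX W x y| ≤ ∑ y', |infoDen pX W x y'| :=
          Finset.single_le_sum (f := fun y' => |infoDen pX W x y'|)
            (fun i _ => abs_nonneg _) (Finset.mem_univ y)
      _ ≤ B := Finset.single_le_sum (f := fun x' => ∑ y', |infoDen pX W x' y'|)
          (fun i _ => Finset.sum_nonneg fun j _ => abs_nonneg _) (Finset.mem_univ x)
  have hB0 : 0 ≤ B :=
    le_trans (abs_nonneg _) (hBb (Classical.arbitrary 𝒳) (Classical.arbitrary 𝒴))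
  have hZb : ∀ k ω, |Z k ω| ≤ B := fun k ω => hBb _ _
  -- the fundamental integral formula
  have hint : ∀ (k : ℕ) (f : 𝒳 → 𝒴 → ℝ),
      ∫ ω, f (X k ω) (Y k ω) ∂μ = ∑ x, ∑ y, pX x * W x y * f x y := by
    intro k f
    have hms : ∀ (x : 𝒳) (y : 𝒴), MeasurableSet {ω | X k ω = x ∧ Y k ω = y} := by
      intro x y
      have : {ω | X k ω = x ∧ Y k ω = y} = X k ⁻¹' {x} ∩ Y k ⁻¹' {y} := by
        ext ω; simp [Set.mem_preimage]
      rw [this]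
      exact ((hXm k) (measurableSet_singleton x)).inter ((hYm k) (measurableSet_singleton y))
    have hpt : ∀ ω, f (X k ω) (Y k ω)
        = ∑ x, ∑ y, Set.indicator {ω' | X k ω' = x ∧ Y k ω' = y} (fun _ => f x y) ω := by
      intro ω
      simp only [Set.indicator_apply, Set.mem_setOf_eq]
      rw [Finset.sum_eq_single (X k ω)]
      · rw [Finset.sum_eq_single (Y k ω)]
        · simp
        · intro y _ hy
          exact if_neg (fun h => hy h.2.symm)
        · intro h; exact absurd (Finset.mem_univ _) h
      · intro x _ hx
        exact Finset.sum_eq_zero fun y _ => if_neg (fun h => hx h.1.symm)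
      · intro h; exact absurd (Finset.mem_univ _) h
    calc ∫ ω, f (X k ω) (Y k ω) ∂μ
        = ∫ ω, ∑ x, ∑ y, Set.indicator {ω' | X k ω' = x ∧ Y k ω' = y} (fun _ => f x y) ω ∂μ := by
          congr 1; funext ω; exact hpt ω
      _ = ∑ x, ∑ y, pX x * W x y * f x y := by
          rw [integral_finset_sum _ (fun x _ =>
            integrable_finset_sum _ (fun y _ => (integrable_const (f x y)).indicator (hms x y)))]
          refine Finset.sum_congr rfl fun x _ => ?_
          rw [integral_finset_sum _ (fun y _ => (integrable_const (f x y)).indicator (hms x y))]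
          refine Finset.sum_congr rfl fun y _ => ?_
          rw [integral_indicator_const (f x y) (hms x y), measureReal_def, hXYlaw k x y,
            ENNReal.toReal_ofReal (mul_nonneg (hpXpos x).le (hWpos x y).le), smul_eq_mul, mul_comm]
  -- basic sums
  have hq1 : ∑ x, ∑ y, pX x * W x y = 1 := by
    rw [← hpXsum]
    refine Finset.sum_congr rfl fun x _ => ?_
    rw [← Finset.mul_sum, hWsum x, mul_one]
  have hPYpos : ∀ y, 0 < outDist pX W y := fun y =>
    Finset.sum_pos (fun x _ => mul_pos (hpXpos x) (hWpos x y)) Finset.univ_nonempty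
  have hPYsum : ∑ y, outDist pX W y = 1 := by
    simp only [outDist]
    rw [Finset.sum_comm, ← hpXsum]
    exact Finset.sum_congr rfl fun x _ => by rw [← Finset.mul_sum, hWsum x, mul_one]
  have hexpneg : ∀ x y, Real.exp (-infoDen pX W x y) = outDist pX W y / W x y := by
    intro x y
    rw [infoDen, Real.exp_neg, Real.exp_log (div_pos (hWpos x y) (hPYpos y)), inv_div]
  have hkey1 : ∑ x, ∑ y, pX x * W x y * Real.exp (-infoDen pX W x y) = 1 := by
    have hterm : ∀ x y, pX x * W x y * Real.exp (-infoDen pX W x y) = pX x * outDist pX W y := by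
      intro x y
      have hrw : pX x * W x y * (outDist pX W y / W x y)
          = pX x * outDist pX W y * (W x y / W x y) := by ring
      rw [hexpneg x y, hrw, div_self (hWpos x y).ne', mul_one]
    calc ∑ x, ∑ y, pX x * W x y * Real.exp (-infoDen pX W x y)
        = ∑ x, ∑ y, pX x * outDist pX W y :=
          Finset.sum_congr rfl fun x _ => Finset.sum_congr rfl fun y _ => hterm x y
      _ = ∑ x, pX x * ∑ y, outDist pX W y :=
          Finset.sum_congr rfl fun x _ => (Finset.mul_sum _ _ _).symm
      _ = 1 := by rw [hPYsum]; simpa using hpXsum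
  -- ρ
  set ρ : ℝ := ∑ x, ∑ y, pX x * W x y * Real.exp (-infoDen pX W x y / 2) with hρdef
  have hρ0 : 0 ≤ ρ := Finset.sum_nonneg fun x _ => Finset.sum_nonneg fun y _ =>
    mul_nonneg (mul_nonneg (hpXpos x).le (hWpos x y).le) (Real.exp_nonneg _)
  have hρ1 : ρ < 1 := by
    obtain ⟨x0, y0, hxy0⟩ : ∃ x y, infoDen pX W x y ≠ 0 := by
      by_contra h
      push_neg at h
      rw [hCdef] at hC
      simp only [h, mul_zero, Finset.sum_const_zero] at hC
      exact lt_irrefl 0 hC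
    have hsq : ∀ x y, Real.exp (-infoDen pX W x y / 2) ^ 2 = Real.exp (-infoDen pX W x y) := by
      intro x y
      rw [sq, ← Real.exp_add]
      ring_nf
    have hpt : ∀ x y, Real.exp (-infoDen pX W x y / 2)
        ≤ (1 + Real.exp (-infoDen pX W x y)) / 2 := by
      intro x y
      nlinarith [sq_nonneg (1 - Real.exp (-infoDen pX W x y / 2)), hsq x y]
    have hne : Real.exp (-infoDen pX W x0 y0 / 2) ≠ 1 := by
      rw [Ne, Real.exp_eq_one_iff]
      intro h
      apply hxy0
      have : infoDen pX W x0 y0 = -2 * (-infoDen pX W x0 y0 / 2) := by ring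
      rw [this, h, mul_zero]
    have hptstrict : Real.exp (-infoDen pX W x0 y0 / 2)
        < (1 + Real.exp (-infoDen pX W x0 y0)) / 2 := by
      have h2 : 0 < (1 - Real.exp (-infoDen pX W x0 y0 / 2)) ^ 2 := by
        have : (1 : ℝ) - Real.exp (-infoDen pX W x0 y0 / 2) ≠ 0 :=
          sub_ne_zero.mpr (Ne.symm hne)
        positivity
      nlinarith [hsq x0 y0]
    have hlt : ρ < ∑ x, ∑ y, pX x * W x y * ((1 + Real.exp (-infoDen pX W x y)) / 2) := by
      refine Finset.sum_lt_sum (fun x _ => Finset.sum_le_sum fun y _ =>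
        mul_le_mul_of_nonneg_left (hpt x y)
          (mul_nonneg (hpXpos x).le (hWpos x y).le)) ⟨x0, Finset.mem_univ x0, ?_⟩
      refine Finset.sum_lt_sum (fun y _ => mul_le_mul_of_nonneg_left (hpt x0 y)
        (mul_nonneg (hpXpos x0).le (hWpos x0 y).le)) ⟨y0, Finset.mem_univ y0, ?_⟩
      exact mul_lt_mul_of_pos_left hptstrict (mul_pos (hpXpos x0) (hWpos x0 y0))
    have heq : ∑ x, ∑ y, pX x * W x y * ((1 + Real.exp (-infoDen pX W x y)) / 2) = 1 := by
      have expand : ∀ x y, pX x * W x y * ((1 + Real.exp (-infoDen pX W x y)) / 2)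
          = pX x * W x y / 2 + pX x * W x y * Real.exp (-infoDen pX W x y) / 2 := by
        intro x y; ring
      calc ∑ x, ∑ y, pX x * W x y * ((1 + Real.exp (-infoDen pX W x y)) / 2)
          = (∑ x, ∑ y, pX x * W x y) / 2
            + (∑ x, ∑ y, pX x * W x y * Real.exp (-infoDen pX W x y)) / 2 := by
            rw [Finset.sum_div, Finset.sum_div, ← Finset.sum_add_distrib]
            refine Finset.sum_congr rfl fun x _ => ?_
            rw [Finset.sum_div, Finset.sum_div, ← Finset.sum_add_distrib]
            exact Finset.sum_congr rfl fun y _ => expand x y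
        _ = 1 := by rw [hq1, hkey1]; norm_num
    linarith
  -- expectations of single coordinates
  have hCint : ∀ k, ∫ ω, Z k ω ∂μ = C := by
    intro k
    simp only [hZdef]
    rw [hCdef]
    exact hint k fun x y => infoDen pX W x y
  have hρint : ∀ k, ∫ ω, Real.exp (-Z k ω / 2) ∂μ = ρ := by
    intro k
    simp only [hZdef, hρdef]
    exact hint k fun x y => Real.exp (-infoDen pX W x y / 2)
  -- block σ-algebras and independence
  let 𝔉 : Set ℕ → MeasurableSpace Ω := fun t =>
    ⨆ k ∈ t, MeasurableSpace.comap (fun ω => (X k ω, Y k ω)) inferInstance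
  have h𝔉le : ∀ t, 𝔉 t ≤ ‹MeasurableSpace Ω› := fun t => iSup₂_le fun k _ => (hVm k).comap_le
  have hmono : ∀ (t : Set ℕ) (f : Ω → ℝ), Measurable[𝔉 t] f → Measurable f :=
    fun t f hf => hf.mono (h𝔉le t) le_rfl
  have hindep : ∀ t : Set ℕ, Indep (𝔉 t) (𝔉 tᶜ) μ :=
    fun t => indep_biSup_compl (fun k => (hVm k).comap_le) hXYindep.iIndep t
  have hblock : ∀ (t : Set ℕ) (f h : Ω → ℝ),
      Measurable[𝔉 t] f → Measurable[𝔉 tᶜ] h → IndepFun f h μ := by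
    intro t f h hf hh
    rw [IndepFun_iff_Indep]
    exact indep_of_indep_of_le_right (indep_of_indep_of_le_left (hindep t) hf.comap_le) hh.comap_le
  have hZmF : ∀ (t : Set ℕ) (k : ℕ), k ∈ t → Measurable[𝔉 t] (Z k) := by
    intro t k hk
    have h1 : Measurable[𝔉 t] (fun ω => (X k ω, Y k ω)) :=
      Measurable.of_comap_le (le_iSup₂
        (f := fun (k : ℕ) (_ : k ∈ t) =>
          MeasurableSpace.comap (fun ω => (X k ω, Y k ω)) inferInstance) k hk)
    exact hgm.comp h1
  have hSmF : ∀ (t : Set ℕ) (n : ℕ), (∀ j, j < n → j ∈ t) → Measurable[𝔉 t] (S n) := by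
    intro t n ht
    exact Finset.measurable_sum _ fun k hk => hZmF t k (ht k (Finset.mem_range.mp hk))
  have hexpZmF : ∀ (t : Set ℕ) (k : ℕ), k ∈ t →
      Measurable[𝔉 t] (fun ω => Real.exp (-Z k ω / 2)) := by
    intro t k hk
    exact Real.measurable_exp.comp (((hZmF t k hk).neg).div_const 2)
  -- indicator facts
  have hIndb : ∀ (s : Set Ω) (ω : Ω), |Set.indicator s (1 : Ω → ℝ) ω| ≤ 1 := by
    intro s ω
    by_cases h : ω ∈ s
    · rw [Set.indicator_of_mem h]; simp
    · rw [Set.indicator_of_notMem h]; simp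
  have hIndnn : ∀ (s : Set Ω) (ω : Ω), 0 ≤ Set.indicator s (1 : Ω → ℝ) ω :=
    fun s ω => Set.indicator_nonneg (fun _ _ => zero_le_one) ω
  -- the constant a
  refine ⟨B / C + Real.exp (B / 2) * (1 - ρ)⁻¹, ?_⟩
  intro γ hγ
  -- events
  set G : ℕ → Set Ω := fun n => {ω | ∀ k ≤ n, S k ω ≤ γ} with hGdef
  set D : ℕ → Set Ω := fun m => {ω | (∀ k ≤ m, S k ω ≤ γ) ∧ γ < S (m + 1) ω} with hDdef
  have hGF : ∀ (t : Set ℕ) (n : ℕ), (∀ j, j < n → j ∈ t) → MeasurableSet[𝔉 t] (G n) := by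
    intro t n ht
    have : G n = ⋂ (k : ℕ), ⋂ (_ : k ≤ n), {ω | S k ω ≤ γ} := by
      ext ω
      simp only [hGdef, Set.mem_iInter, Set.mem_setOf_eq]
    rw [this]
    exact MeasurableSet.iInter fun k => MeasurableSet.iInter fun hk =>
      measurableSet_le (hSmF t k fun j hj => ht j (lt_of_lt_of_le hj hk)) measurable_const
  have hDF : ∀ (t : Set ℕ) (m : ℕ), (∀ j, j < m + 1 → j ∈ t) → MeasurableSet[𝔉 t] (D m) := by
    intro t m ht
    have : D m = G m ∩ {ω | γ < S (m + 1) ω} := by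
      ext ω
      simp only [hDdef, hGdef, Set.mem_inter_iff, Set.mem_setOf_eq]
    rw [this]
    exact (hGF t m fun j hj => ht j (by omega)).inter
      (measurableSet_lt measurable_const (hSmF t (m + 1) ht))
  have hGm : ∀ n, MeasurableSet (G n) :=
    fun n => h𝔉le {j | j < n} _ (hGF {j | j < n} n fun j hj => hj)
  have hDm : ∀ m, MeasurableSet (D m) :=
    fun m => h𝔉le {j | j < m + 1} _ (hDF {j | j < m + 1} m fun j hj => hj)
  have hIndInt : ∀ (s : Set Ω), MeasurableSet s → Integrable (Set.indicator s (1 : Ω → ℝ)) μ :=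
    fun s hs => (integrable_const 1).indicator hs
  -- Wald part
  have hW1 : ∀ k, ∫ ω, Set.indicator (G k) 1 ω * Z k ω ∂μ = (μ (G k)).toReal * C := by
    intro k
    have hGsub : MeasurableSet[𝔉 {j | j < k}] (G k) := hGF _ k fun j hj => hj
    have hIf : Measurable[𝔉 {j | j < k}] (Set.indicator (G k) (1 : Ω → ℝ)) :=
      measurable_const.indicator hGsub
    have hZc : Measurable[𝔉 {j | j < k}ᶜ] (Z k) := by
      refine hZmF _ k ?_
      simp [Set.mem_compl_iff]
    have hIndep := hblock _ _ _ hIf hZc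
    calc ∫ ω, Set.indicator (G k) 1 ω * Z k ω ∂μ
        = (∫ ω, Set.indicator (G k) 1 ω ∂μ) * ∫ ω, Z k ω ∂μ :=
          hIndep.integral_fun_mul_eq_mul_integral
            (intb _ 1 (hmono _ _ hIf) (hIndb _)).aestronglyMeasurable
            (intb _ B (hZm k) (hZb k)).aestronglyMeasurable
      _ = (μ (G k)).toReal * C := by rw [integral_indicator_one (hGm k), hCint k, measureReal_def]
  have hTle : ∀ (n : ℕ) (ω : Ω),
      (∑ k ∈ Finset.range n, Set.indicator (G k) 1 ω * Z k ω) ≤ γ + B := by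
    intro n ω
    have hTS : ∀ m, ω ∈ G m →
        (∑ k ∈ Finset.range (m + 1), Set.indicator (G k) 1 ω * Z k ω) = S (m + 1) ω := by
      intro m
      induction m with
      | zero =>
        intro h
        simp only [hSdef]
        rw [Finset.sum_range_one, Finset.sum_range_one, Set.indicator_of_mem h,
          Pi.one_apply, one_mul]
      | succ m ih =>
        intro h
        have hm : ω ∈ G m := fun k hk => h k (by omega)
        rw [Finset.sum_range_succ, ih hm, Set.indicator_of_mem h, Pi.one_apply, one_mul]
        simp only [hSdef]
        exact (Finset.sum_range_succ (fun k => Z k ω) (m + 1)).symm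
    induction n with
    | zero =>
      rw [Finset.sum_range_zero]
      linarith
    | succ n ih =>
      by_cases h : ω ∈ G n
      · rw [hTS n h]
        have h1 : S n ω ≤ γ := h n le_rfl
        have h2 : Z n ω ≤ B := (abs_le.mp (hZb n ω)).2
        have h3 : S (n + 1) ω = S n ω + Z n ω := by
          simp only [hSdef]; exact Finset.sum_range_succ _ _
        linarith
      · rw [Finset.sum_range_succ, Set.indicator_of_notMem h, zero_mul, add_zero]
        exact ih
  have hProdInt : ∀ k, Integrable (fun ω => Set.indicator (G k) 1 ω * Z k ω) μ := by
    intro k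
    refine intb _ B (((hmono _ _ (measurable_const.indicator
      (hGF {j | j < k} k fun j hj => hj)))).mul (hZm k)) ?_
    intro ω
    calc |Set.indicator (G k) 1 ω * Z k ω| = |Set.indicator (G k) 1 ω| * |Z k ω| := abs_mul _ _
      _ ≤ 1 * B := mul_le_mul (hIndb _ ω) (hZb k ω) (abs_nonneg _) zero_le_one
      _ = B := one_mul B
  have hGsum : ∀ n, ∑ k ∈ Finset.range n, (μ (G k)).toReal ≤ (γ + B) / C := by
    intro n
    have h1 : ∫ ω, (∑ k ∈ Finset.range n, Set.indicator (G k) 1 ω * Z k ω) ∂μ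
        = ∑ k ∈ Finset.range n, (μ (G k)).toReal * C := by
      rw [integral_finset_sum _ fun k _ => hProdInt k]
      exact Finset.sum_congr rfl fun k _ => hW1 k
    have h2 : ∫ ω, (∑ k ∈ Finset.range n, Set.indicator (G k) 1 ω * Z k ω) ∂μ ≤ γ + B := by
      have := integral_mono (integrable_finset_sum _ fun k _ => hProdInt k)
        (integrable_const (γ + B)) (fun ω => hTle n ω)
      simpa [integral_const, measure_univ] using this
    refine (le_div_iff₀ hC).mpr ?_
    calc (∑ k ∈ Finset.range n, (μ (G k)).toReal) * C
        = ∑ k ∈ Finset.range n, (μ (G k)).toReal * C := by rw [Finset.sum_mul]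
      _ = ∫ ω, (∑ k ∈ Finset.range n, Set.indicator (G k) 1 ω * Z k ω) ∂μ := h1.symm
      _ ≤ γ + B := h2
  -- product part
  set Wf : ℕ → ℕ → Ω → ℝ := fun t n ω => ∏ k ∈ Finset.Ico t n, Real.exp (-Z k ω / 2)
    with hWfdef
  have hWfpos : ∀ t n ω, 0 < Wf t n ω := fun t n ω => Finset.prod_pos fun k _ => Real.exp_pos _
  have hWfb : ∀ t n ω, |Wf t n ω| ≤ Real.exp (B / 2) ^ (n - t) := by
    intro t n ω
    rw [abs_of_pos (hWfpos t n ω)]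
    simp only [hWfdef]
    calc ∏ k ∈ Finset.Ico t n, Real.exp (-Z k ω / 2)
        ≤ ∏ k ∈ Finset.Ico t n, Real.exp (B / 2) := by
          refine Finset.prod_le_prod (fun k _ => (Real.exp_pos _).le) (fun k _ => ?_)
          refine Real.exp_le_exp.mpr ?_
          have := (abs_le.mp (hZb k ω)).1
          linarith
      _ = Real.exp (B / 2) ^ (n - t) := by rw [Finset.prod_const, Nat.card_Ico]
  have hWfmF : ∀ (ts : Set ℕ) (t n : ℕ), (∀ k, t ≤ k → k < n → k ∈ ts) →
      Measurable[𝔉 ts] (Wf t n) := by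
    intro ts t n h
    refine Finset.measurable_prod _ fun k hk => ?_
    have hk' := Finset.mem_Ico.mp hk
    exact hexpZmF ts k (h k hk'.1 hk'.2)
  have hWfm : ∀ t n, Measurable (Wf t n) :=
    fun t n => hmono _ _ (hWfmF Set.univ t n fun k _ _ => Set.mem_univ k)
  have hWfint : ∀ t n, ∫ ω, Wf t n ω ∂μ = ρ ^ (n - t) := by
    intro t n
    induction n with
    | zero =>
      have he : Finset.Ico t 0 = ∅ := by simp
      simp [hWfdef, he, integral_const, measure_univ]
    | succ n ih =>
      by_cases h : t ≤ n
      · have hsplit : ∀ ω, Wf t (n + 1) ω = Wf t n ω * Real.exp (-Z n ω / 2) := by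
          intro ω
          simp only [hWfdef]
          rw [Finset.prod_Ico_succ_top h]
        have hi1 : IndepFun (Wf t n) (fun ω => Real.exp (-Z n ω / 2)) μ := by
          refine hblock {j | j < n} _ _ (hWfmF _ t n fun k _ hk2 => hk2) ?_
          refine hexpZmF _ n ?_
          simp [Set.mem_compl_iff]
        calc ∫ ω, Wf t (n + 1) ω ∂μ
            = ∫ ω, Wf t n ω * Real.exp (-Z n ω / 2) ∂μ := by
              congr 1; funext ω; exact hsplit ω
          _ = (∫ ω, Wf t n ω ∂μ) * ∫ ω, Real.exp (-Z n ω / 2) ∂μ :=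
              hi1.integral_fun_mul_eq_mul_integral
                (intb _ _ (hWfm t n) (hWfb t n)).aestronglyMeasurable
                (intb (fun ω => Real.exp (-Z n ω / 2)) (Real.exp (B / 2))
                  (Real.measurable_exp.comp ((hZm n).neg.div_const 2))
                  (fun ω => by
                    rw [abs_of_pos (Real.exp_pos _)]
                    refine Real.exp_le_exp.mpr ?_
                    have := (abs_le.mp (hZb n ω)).1
                    linarith)).aestronglyMeasurable
          _ = ρ ^ (n - t) * ρ := by rw [ih, hρint n]
          _ = ρ ^ (n + 1 - t) := by
              rw [← pow_succ]
              congr 1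
              omega
      · have he : Finset.Ico t (n + 1) = ∅ := by
          apply Finset.Ico_eq_empty
          omega
        have hnt : n + 1 - t = 0 := by omega
        simp [hWfdef, he, hnt, integral_const, measure_univ]
  have hDint : ∀ m n, m < n →
      ∫ ω, Set.indicator (D m) 1 ω * Wf (m + 1) n ω ∂μ
        = (μ (D m)).toReal * ρ ^ (n - (m + 1)) := by
    intro m n hmn
    have hDsub : MeasurableSet[𝔉 {j | j < m + 1}] (D m) := hDF _ m fun j hj => hj
    have hIf : Measurable[𝔉 {j | j < m + 1}] (Set.indicator (D m) (1 : Ω → ℝ)) :=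
      measurable_const.indicator hDsub
    have hWc : Measurable[𝔉 {j | j < m + 1}ᶜ] (Wf (m + 1) n) := by
      refine hWfmF _ (m + 1) n fun k hk1 _ => ?_
      simp only [Set.mem_compl_iff, Set.mem_setOf_eq]
      omega
    have hIndep := hblock _ _ _ hIf hWc
    calc ∫ ω, Set.indicator (D m) 1 ω * Wf (m + 1) n ω ∂μ
        = (∫ ω, Set.indicator (D m) 1 ω ∂μ) * ∫ ω, Wf (m + 1) n ω ∂μ :=
          hIndep.integral_fun_mul_eq_mul_integral
            (intb _ 1 (hmono _ _ hIf) (hIndb _)).aestronglyMeasurable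
            (intb _ _ (hWfm (m + 1) n) (hWfb (m + 1) n)).aestronglyMeasurable
      _ = (μ (D m)).toReal * ρ ^ (n - (m + 1)) := by
          rw [integral_indicator_one (hDm m), hWfint (m + 1) n, measureReal_def]
  -- partition
  have hS0 : ∀ ω, S 0 ω = 0 := by
    intro ω
    simp only [hSdef]
    exact Finset.sum_range_zero _
  have hpart : ∀ (n : ℕ) (ω : Ω),
      Set.indicator (G n) (1 : Ω → ℝ) ω
        + ∑ m ∈ Finset.range n, Set.indicator (D m) (1 : Ω → ℝ) ω = 1 := by
    intro n ω
    induction n with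
    | zero =>
      have hmem : ω ∈ G 0 := by
        intro k hk
        have hk0 : k = 0 := Nat.le_zero.mp hk
        rw [hk0, hS0]
        exact hγ
      rw [Set.indicator_of_mem hmem (1 : Ω → ℝ)]
      simp
    | succ n ih =>
      have key : Set.indicator (G (n + 1)) (1 : Ω → ℝ) ω + Set.indicator (D n) (1 : Ω → ℝ) ω
          = Set.indicator (G n) (1 : Ω → ℝ) ω := by
        by_cases hg : ω ∈ G n
        · by_cases hs : S (n + 1) ω ≤ γ
          · have h1 : ω ∈ G (n + 1) := by
              intro k hk
              rcases Nat.lt_or_ge k (n + 1) with hlt | hge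
              · exact hg k (by omega)
              · have : k = n + 1 := by omega
                rw [this]; exact hs
            have h2 : ω ∉ D n := fun hd => absurd hd.2 (not_lt.mpr hs)
            rw [Set.indicator_of_mem h1, Set.indicator_of_mem hg, Set.indicator_of_notMem h2,
              add_zero]
          · have h1 : ω ∉ G (n + 1) := fun hgg => hs (hgg (n + 1) le_rfl)
            have h2 : ω ∈ D n := ⟨hg, not_le.mp hs⟩
            rw [Set.indicator_of_notMem h1, Set.indicator_of_mem h2, Set.indicator_of_mem hg,
              zero_add]
        · have h1 : ω ∉ G (n + 1) := fun hgg => hg (fun k hk => hgg k (by omega))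
          have h2 : ω ∉ D n := fun hd => hg hd.1
          rw [Set.indicator_of_notMem h1, Set.indicator_of_notMem h2,
            Set.indicator_of_notMem hg, add_zero]
      rw [Finset.sum_range_succ]
      linarith
  have hDsum : ∀ n, ∑ m ∈ Finset.range n, (μ (D m)).toReal ≤ 1 := by
    intro n
    calc ∑ m ∈ Finset.range n, (μ (D m)).toReal
        = ∑ m ∈ Finset.range n, ∫ ω, Set.indicator (D m) 1 ω ∂μ :=
          Finset.sum_congr rfl fun m _ => (integral_indicator_one (hDm m)).symm
      _ = ∫ ω, ∑ m ∈ Finset.range n, Set.indicator (D m) 1 ω ∂μ :=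
          (integral_finset_sum _ fun m _ => hIndInt _ (hDm m)).symm
      _ = ∫ ω, (1 - Set.indicator (G n) 1 ω) ∂μ := by
          refine integral_congr_ae (Filter.Eventually.of_forall fun ω => ?_)
          show ∑ m ∈ Finset.range n, Set.indicator (D m) 1 ω
            = 1 - Set.indicator (G n) 1 ω
          have := hpart n ω
          linarith
      _ = 1 - (μ (G n)).toReal := by
          rw [integral_sub (integrable_const 1) (hIndInt _ (hGm n)),
            integral_indicator_one (hGm n)]
          simp [integral_const, measure_univ, measureReal_def]
      _ ≤ 1 := by
          have : (0:ℝ) ≤ (μ (G n)).toReal := ENNReal.toReal_nonneg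
          linarith
  -- master pointwise bound
  have hmaster : ∀ (n : ℕ) (ω : Ω), Real.exp (-(max (S n ω - γ) 0))
      ≤ Set.indicator (G n) 1 ω
        + Real.exp (B / 2) * ∑ m ∈ Finset.range n, Set.indicator (D m) 1 ω * Wf (m + 1) n ω := by
    intro n ω
    have hle1 : Real.exp (-(max (S n ω - γ) 0)) ≤ 1 :=
      Real.exp_le_one_iff.mpr (neg_nonpos.mpr (le_max_right _ 0))
    have hsum_nn : 0 ≤ ∑ m ∈ Finset.range n, Set.indicator (D m) 1 ω * Wf (m + 1) n ω :=
      Finset.sum_nonneg fun m _ => mul_nonneg (hIndnn _ ω) (hWfpos _ _ ω).le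
    by_cases hg : ω ∈ G n
    · rw [Set.indicator_of_mem hg, Pi.one_apply]
      have : 0 ≤ Real.exp (B / 2) * ∑ m ∈ Finset.range n, Set.indicator (D m) 1 ω
          * Wf (m + 1) n ω := mul_nonneg (Real.exp_nonneg _) hsum_nn
      linarith
    · -- find the first crossing time
      have hex : ∃ k, γ < S k ω := by
        by_contra hcon
        push_neg at hcon
        exact hg fun k _ => hcon k
      have hexn : ∃ k ≤ n, γ < S k ω := by
        by_contra hcon
        push_neg at hcon
        exact hg fun k hk => hcon k hk
      set k0 := Nat.find hex with hk0def
      have hk0P : γ < S k0 ω := Nat.find_spec hex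
      have hk0n : k0 ≤ n := by
        obtain ⟨k, hkn, hkP⟩ := hexn
        exact le_trans (Nat.find_min' hex hkP) hkn
      have hk0pos : 1 ≤ k0 := by
        by_contra hcon
        push_neg at hcon
        interval_cases k0
        · rw [hS0] at hk0P
          exact absurd hk0P (not_lt.mpr hγ)
      obtain ⟨m, hm⟩ : ∃ m, k0 = m + 1 := ⟨k0 - 1, by omega⟩
      have hmn : m < n := by omega
      have hDmem : ω ∈ D m := by
        refine ⟨fun k hk => ?_, ?_⟩
        · have hkk0 : k < k0 := by omega
          have := Nat.find_min hex hkk0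
          exact not_lt.mp this
        · rw [← hm]; exact hk0P
      have h1 : S m ω ≤ γ := hDmem.1 m le_rfl
      have h2 : γ < S (m + 1) ω := hDmem.2
      have h3 : S (m + 1) ω ≤ γ + B := by
        have hstep : S (m + 1) ω = S m ω + Z m ω := by
          simp only [hSdef]; exact Finset.sum_range_succ _ _
        have := (abs_le.mp (hZb m ω)).2
        linarith
      have hWfval : Wf (m + 1) n ω = Real.exp (-(S n ω - S (m + 1) ω) / 2) := by
        simp only [hWfdef]
        rw [← Real.exp_sum]
        congr 1
        have hsum : ∑ k ∈ Finset.Ico (m + 1) n, Z k ω = S n ω - S (m + 1) ω := by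
          simp only [hSdef]
          exact Finset.sum_Ico_eq_sub _ (by omega)
        calc ∑ k ∈ Finset.Ico (m + 1) n, -Z k ω / 2
            = (∑ k ∈ Finset.Ico (m + 1) n, -Z k ω) / 2 := by rw [Finset.sum_div]
          _ = -(∑ k ∈ Finset.Ico (m + 1) n, Z k ω) / 2 := by rw [Finset.sum_neg_distrib]
          _ = -(S n ω - S (m + 1) ω) / 2 := by rw [hsum]
      have hmain : Real.exp (-(max (S n ω - γ) 0))
          ≤ Real.exp (B / 2) * Wf (m + 1) n ω := by
        rw [hWfval, ← Real.exp_add]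
        refine Real.exp_le_exp.mpr ?_
        rcases le_or_gt (S n ω) γ with hc | hc
        · rw [max_eq_right (by linarith)]
          linarith
        · rw [max_eq_left (by linarith)]
          linarith
      have hterm : Wf (m + 1) n ω ≤ ∑ m' ∈ Finset.range n,
          Set.indicator (D m') 1 ω * Wf (m' + 1) n ω := by
        have hval : Set.indicator (D m) 1 ω * Wf (m + 1) n ω = Wf (m + 1) n ω := by
          rw [Set.indicator_of_mem hDmem, Pi.one_apply, one_mul]
        calc Wf (m + 1) n ω = Set.indicator (D m) 1 ω * Wf (m + 1) n ω := hval.symm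
          _ ≤ ∑ m' ∈ Finset.range n, Set.indicator (D m') 1 ω * Wf (m' + 1) n ω :=
            Finset.single_le_sum (f := fun m' => Set.indicator (D m') 1 ω * Wf (m' + 1) n ω)
              (fun m' _ => mul_nonneg (hIndnn _ ω) (hWfpos _ _ ω).le)
              (Finset.mem_range.mpr hmn)
      have hind0 : Set.indicator (G n) (1 : Ω → ℝ) ω = 0 := Set.indicator_of_notMem hg 1
      have hfinal : Real.exp (-(max (S n ω - γ) 0))
          ≤ Real.exp (B / 2) * ∑ m' ∈ Finset.range n,
              Set.indicator (D m') 1 ω * Wf (m' + 1) n ω :=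
        le_trans hmain (mul_le_mul_of_nonneg_left hterm (Real.exp_nonneg _))
      linarith
  -- per-n integral bound
  have hprodDint : ∀ n m, Integrable (fun ω => Set.indicator (D m) 1 ω * Wf (m + 1) n ω) μ := by
    intro n m
    refine intb _ (Real.exp (B / 2) ^ (n - (m + 1)))
      ((hmono _ _ (measurable_const.indicator (hDF {j | j < m + 1} m fun j hj => hj))).mul
        (hWfm (m + 1) n)) ?_
    intro ω
    calc |Set.indicator (D m) 1 ω * Wf (m + 1) n ω|
        = |Set.indicator (D m) 1 ω| * |Wf (m + 1) n ω| := abs_mul _ _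
      _ ≤ 1 * (Real.exp (B / 2) ^ (n - (m + 1))) :=
          mul_le_mul (hIndb _ ω) (hWfb (m + 1) n ω) (abs_nonneg _) zero_le_one
      _ = Real.exp (B / 2) ^ (n - (m + 1)) := one_mul _
  have hEn : ∀ n, (∫ ω, Real.exp (-(max (S n ω - γ) 0)) ∂μ)
      ≤ (μ (G n)).toReal
        + Real.exp (B / 2) * ∑ m ∈ Finset.range n, (μ (D m)).toReal * ρ ^ (n - (m + 1)) := by
    intro n
    have hLm : Measurable (fun ω => Real.exp (-(max (S n ω - γ) 0))) :=
      Real.measurable_exp.comp (((hSm n).sub measurable_const).max measurable_const).neg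
    have hLint : Integrable (fun ω => Real.exp (-(max (S n ω - γ) 0))) μ := by
      refine intb _ 1 hLm fun ω => ?_
      rw [abs_of_pos (Real.exp_pos _)]
      exact Real.exp_le_one_iff.mpr (neg_nonpos.mpr (le_max_right _ 0))
    have hRint2 : Integrable (fun ω => Real.exp (B / 2)
        * ∑ m ∈ Finset.range n, Set.indicator (D m) 1 ω * Wf (m + 1) n ω) μ :=
      (integrable_finset_sum _ fun m _ => hprodDint n m).const_mul _
    have hRint : Integrable (fun ω => Set.indicator (G n) 1 ω + Real.exp (B / 2)
        * ∑ m ∈ Finset.range n, Set.indicator (D m) 1 ω * Wf (m + 1) n ω) μ :=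
      (hIndInt _ (hGm n)).add hRint2
    have hmono' := integral_mono hLint hRint (fun ω => hmaster n ω)
    have hR : ∫ ω, (Set.indicator (G n) 1 ω + Real.exp (B / 2)
        * ∑ m ∈ Finset.range n, Set.indicator (D m) 1 ω * Wf (m + 1) n ω) ∂μ
        = (μ (G n)).toReal
          + Real.exp (B / 2) * ∑ m ∈ Finset.range n, (μ (D m)).toReal * ρ ^ (n - (m + 1)) := by
      rw [integral_add (hIndInt _ (hGm n)) hRint2, integral_indicator_one (hGm n),
        integral_const_mul, integral_finset_sum _ fun m _ => hprodDint n m]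
      congr 1
      refine congrArg _ ?_
      exact Finset.sum_congr rfl fun m hm => hDint m n (Finset.mem_range.mp hm)
    rw [hR] at hmono'
    exact hmono'
  -- summing up
  have hpartial : ∀ N, ∑ n ∈ Finset.range N, (∫ ω, Real.exp (-(max (S n ω - γ) 0)) ∂μ)
      ≤ γ / C + (B / C + Real.exp (B / 2) * (1 - ρ)⁻¹) := by
    intro N
    have h1 : ∑ n ∈ Finset.range N, (∫ ω, Real.exp (-(max (S n ω - γ) 0)) ∂μ)
        ≤ ∑ n ∈ Finset.range N, ((μ (G n)).toReal
          + Real.exp (B / 2) * ∑ m ∈ Finset.range n, (μ (D m)).toReal * ρ ^ (n - (m + 1))) :=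
      Finset.sum_le_sum fun n _ => hEn n
    rw [Finset.sum_add_distrib] at h1
    have h3 : ∑ n ∈ Finset.range N, (μ (G n)).toReal ≤ γ / C + B / C := by
      calc ∑ n ∈ Finset.range N, (μ (G n)).toReal ≤ (γ + B) / C := hGsum N
        _ = γ / C + B / C := add_div γ B C
    have h2 : ∑ n ∈ Finset.range N, Real.exp (B / 2)
        * (∑ m ∈ Finset.range n, (μ (D m)).toReal * ρ ^ (n - (m + 1)))
        ≤ Real.exp (B / 2) * (1 - ρ)⁻¹ := by
      rw [← Finset.mul_sum]
      refine mul_le_mul_of_nonneg_left ?_ (Real.exp_nonneg _)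
      have hswap : ∑ n ∈ Finset.range N, ∑ m ∈ Finset.range n,
          (μ (D m)).toReal * ρ ^ (n - (m + 1))
          = ∑ m ∈ Finset.range N, ∑ n ∈ Finset.range N,
            (if m < n then (μ (D m)).toReal * ρ ^ (n - (m + 1)) else 0) := by
        calc ∑ n ∈ Finset.range N, ∑ m ∈ Finset.range n,
              (μ (D m)).toReal * ρ ^ (n - (m + 1))
            = ∑ n ∈ Finset.range N, ∑ m ∈ Finset.range N,
              (if m < n then (μ (D m)).toReal * ρ ^ (n - (m + 1)) else 0) := by
              refine Finset.sum_congr rfl fun n hn => ?_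
              have hnN := Finset.mem_range.mp hn
              have hfil : (Finset.range N).filter (fun m => m < n) = Finset.range n := by
                ext m
                simp only [Finset.mem_filter, Finset.mem_range]
                omega
              rw [← Finset.sum_filter, hfil]
          _ = ∑ m ∈ Finset.range N, ∑ n ∈ Finset.range N,
              (if m < n then (μ (D m)).toReal * ρ ^ (n - (m + 1)) else 0) := Finset.sum_comm
      rw [hswap]
      have hgeom : ∀ K, ∑ j ∈ Finset.range K, ρ ^ j ≤ (1 - ρ)⁻¹ := by
        intro K
        have hs := summable_geometric_of_lt_one hρ0 hρ1
        have := hs.sum_le_tsum (Finset.range K) (fun i _ => pow_nonneg hρ0 i)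
        rwa [tsum_geometric_of_lt_one hρ0 hρ1] at this
      calc ∑ m ∈ Finset.range N, ∑ n ∈ Finset.range N,
            (if m < n then (μ (D m)).toReal * ρ ^ (n - (m + 1)) else 0)
          ≤ ∑ m ∈ Finset.range N, (μ (D m)).toReal * (1 - ρ)⁻¹ := by
            refine Finset.sum_le_sum fun m _ => ?_
            have heq : ∑ n ∈ Finset.range N,
                (if m < n then (μ (D m)).toReal * ρ ^ (n - (m + 1)) else 0)
                = (μ (D m)).toReal * ∑ j ∈ Finset.range (N - (m + 1)), ρ ^ j := by
              rw [← Finset.sum_filter]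
              have hfil : (Finset.range N).filter (fun n => m < n) = Finset.Ico (m + 1) N := by
                ext n
                simp only [Finset.mem_filter, Finset.mem_range, Finset.mem_Ico]
                omega
              rw [hfil, Finset.sum_Ico_eq_sum_range, Finset.mul_sum]
              refine Finset.sum_congr rfl fun j _ => ?_
              have hj : m + 1 + j - (m + 1) = j := by omega
              rw [hj]
            rw [heq]
            refine mul_le_mul_of_nonneg_left (hgeom _) ENNReal.toReal_nonneg
        _ ≤ 1 * (1 - ρ)⁻¹ := by
            rw [← Finset.sum_mul]
            exact mul_le_mul_of_nonneg_right (hDsum N) (inv_nonneg.mpr (by linarith))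
        _ = (1 - ρ)⁻¹ := one_mul _
    linarith
  have hnn : ∀ n, 0 ≤ ∫ ω, Real.exp (-(max (S n ω - γ) 0)) ∂μ :=
    fun n => integral_nonneg fun ω => (Real.exp_pos _).le
  have final1 : Summable (fun n : ℕ => ∫ ω, Real.exp (-(max (S n ω - γ) 0)) ∂μ) :=
    summable_of_sum_range_le hnn hpartial
  have final2 : ∑' n : ℕ, (∫ ω, Real.exp (-(max (S n ω - γ) 0)) ∂μ)
      ≤ γ / C + (B / C + Real.exp (B / 2) * (1 - ρ)⁻¹) :=
    Real.tsum_le_of_sum_range_le hnn hpartial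
  simp only [hSdef, hZdef] at final1 final2
  exact ⟨final1, final2⟩
end

section
/- Fix Δ ∈ (0, C). There exist a finite constant a and a threshold M_0 (both depending only on P_X, W and Δ) such that for every real M ≥ M_0, setting N = ⌈log M/(C−Δ)⌉, one has P[S_N < log M] ≤ 1/2 and (1 − P[S_N < log M])^{−1} · Σ_{n=0}^{N−1} E[exp(−[S_n − log M]^+)] ≤ (log M)/C + a. -/
open MeasureTheory ProbabilityTheory

section Aux

variable {P : Type*} [Fintype P] [Nonempty P]

noncomputable def extT (m : ℕ) (v : Fin m → P) : ℕ → P :=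
  fun k => if h : k < m then v ⟨k, h⟩ else Classical.arbitrary P

lemma extT_lt {m : ℕ} (v : Fin m → P) {k : ℕ} (h : k < m) : extT m v k = v ⟨k, h⟩ := dif_pos h

/-- finite-sum "expectation" of a functional of the first `m` coordinates -/
noncomputable def ESum (q : P → ℝ) (m : ℕ) (g : (ℕ → P) → ℝ) : ℝ :=
  ∑ v : Fin m → P, (∏ k, q (v k)) * g (extT m v)

lemma ESum_nonneg {q : P → ℝ} (hq : ∀ p, 0 ≤ q p) {m : ℕ} {g : (ℕ → P) → ℝ}
    (hg : ∀ v, 0 ≤ g v) : 0 ≤ ESum q m g :=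
  Finset.sum_nonneg fun v _ => mul_nonneg (Finset.prod_nonneg fun k _ => hq _) (hg _)

lemma ESum_mono {q : P → ℝ} (hq : ∀ p, 0 ≤ q p) {m : ℕ} {g g' : (ℕ → P) → ℝ}
    (h : ∀ v, g v ≤ g' v) : ESum q m g ≤ ESum q m g' :=
  Finset.sum_le_sum fun v _ =>
    mul_le_mul_of_nonneg_left (h _) (Finset.prod_nonneg fun k _ => hq _)

lemma ESum_add (q : P → ℝ) (m : ℕ) (g g' : (ℕ → P) → ℝ) :
    ESum q m (fun v => g v + g' v) = ESum q m g + ESum q m g' := by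
  simp [ESum, mul_add, Finset.sum_add_distrib]

lemma ESum_exp (q : P → ℝ) (f : P → ℝ) (t c : ℝ) (m : ℕ) :
    ESum q m (fun v => Real.exp (c - t * ∑ k ∈ Finset.range m, f (v k)))
      = Real.exp c * (∑ p, q p * Real.exp (-(t * f p))) ^ m := by
  have hsum : ∀ v : Fin m → P,
      ∑ k ∈ Finset.range m, f (extT m v k) = ∑ k : Fin m, f (v k) := by
    intro v
    rw [← Fin.sum_univ_eq_sum_range (fun k => f (extT m v k)) m]
    exact Finset.sum_congr rfl fun k _ => by rw [extT_lt _ k.2, Fin.eta]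
  have hterm : ∀ v : Fin m → P,
      (∏ k, q (v k)) * Real.exp (c - t * ∑ k ∈ Finset.range m, f (extT m v k))
        = Real.exp c * ∏ k, (q (v k) * Real.exp (-(t * f (v k)))) := by
    intro v
    rw [hsum, Finset.prod_mul_distrib, ← Real.exp_sum]
    rw [show c - t * ∑ k : Fin m, f (v k) = c + ∑ k : Fin m, -(t * f (v k)) by
      rw [Finset.sum_neg_distrib, ← Finset.mul_sum]; ring]
    rw [Real.exp_add]
    ring
  rw [ESum, Finset.sum_congr rfl fun v _ => hterm v, ← Finset.mul_sum]
  congr 1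
  have := Finset.prod_univ_sum (fun _ : Fin m => (Finset.univ : Finset P))
    (fun _ p => q p * Real.exp (-(t * f p)))
  rw [Fintype.piFinset_univ] at this
  rw [← this, Finset.prod_const, Finset.card_univ, Fintype.card_fin]

lemma ESum_split (q : P → ℝ) (j m : ℕ) (g₁ g₂ : (ℕ → P) → ℝ)
    (hg₁ : ∀ v w, (∀ k, k < j → v k = w k) → g₁ v = g₁ w)
    (hg₂ : ∀ v w, (∀ k, k < m → v k = w k) → g₂ v = g₂ w) :
    ESum q (j + m) (fun v => g₁ v * g₂ (fun k => v (j + k)))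
      = ESum q j g₁ * ESum q m g₂ := by
  classical
  rw [ESum, ← Equiv.sum_comp (Fin.appendEquiv j m)]
  rw [Fintype.sum_prod_type]
  rw [ESum, ESum, Finset.sum_mul_sum]
  refine Finset.sum_congr rfl fun u _ => Finset.sum_congr rfl fun w _ => ?_
  have happ : Fin.appendEquiv j m (u, w) = Fin.append u w := rfl
  rw [happ]
  have hprod : (∏ k, q (Fin.append u w k)) = (∏ k, q (u k)) * ∏ k, q (w k) := by
    rw [Fin.prod_univ_add (fun k => q (Fin.append u w k))]
    congr 1
    · exact Finset.prod_congr rfl fun k _ => by rw [Fin.append_left]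
    · exact Finset.prod_congr rfl fun k _ => by rw [Fin.append_right]
  have h1 : g₁ (extT (j + m) (Fin.append u w)) = g₁ (extT j u) := by
    refine hg₁ _ _ fun k hk => ?_
    rw [extT_lt _ (lt_of_lt_of_le hk (Nat.le_add_right j m)), extT_lt _ hk]
    have : (⟨k, lt_of_lt_of_le hk (Nat.le_add_right j m)⟩ : Fin (j + m))
        = Fin.castAdd m ⟨k, hk⟩ := rfl
    rw [this, Fin.append_left]
  have h2 : g₂ (fun k => extT (j + m) (Fin.append u w) (j + k)) = g₂ (extT m w) := by
    refine hg₂ _ _ fun k hk => ?_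
    rw [extT_lt _ (by omega : j + k < j + m), extT_lt _ hk]
    have : (⟨j + k, by omega⟩ : Fin (j + m)) = Fin.natAdd j ⟨k, hk⟩ := rfl
    rw [this, Fin.append_right]
  rw [hprod, h1, h2]
  ring

lemma exists_good_t (q f : P → ℝ) (hq1 : ∑ p, q p = 1) (β C : ℝ)
    (hCdef : ∑ p, q p * f p = C) (hβ : β < C) :
    ∃ t : ℝ, 0 < t ∧ t ≤ 1 ∧
      Real.exp (t * β) * ∑ p, q p * Real.exp (-(t * f p)) < 1 := by
  classical
  set F : ℝ → ℝ := fun t => ∑ p, q p * Real.exp (t * (β - f p)) with hF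
  have hFd : HasDerivAt F (β - C) 0 := by
    have h1 : ∀ p ∈ Finset.univ,
        HasDerivAt (fun t => q p * Real.exp (t * (β - f p))) (q p * (β - f p)) 0 := by
      intro p _
      have h0 : HasDerivAt (fun t : ℝ => t * (β - f p)) (β - f p) 0 :=
        hasDerivAt_mul_const (β - f p)
      have := (h0.exp).const_mul (q p)
      simpa using this
    have h2 := HasDerivAt.fun_sum h1
    refine h2.congr_deriv ?_
    have h3 : ∑ i, q i * (β - f i) = (∑ i, q i) * β - ∑ i, q i * f i := by
      rw [Finset.sum_mul, ← Finset.sum_sub_distrib]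
      exact Finset.sum_congr rfl fun p _ => by ring
    rw [h3, hq1, hCdef, one_mul]
  have hF0 : F 0 = 1 := by simp [hF, hq1]
  have hslope : Filter.Tendsto (slope F 0) (nhdsWithin 0 (Set.Ioi 0)) (nhds (β - C)) :=
    (hasDerivAt_iff_tendsto_slope.mp hFd).mono_left
      (nhdsWithin_mono 0 (fun t ht => ne_of_gt ht))
  have hev : ∀ᶠ t in nhdsWithin 0 (Set.Ioi 0),
      slope F 0 t < 0 ∧ 0 < t ∧ t ≤ 1 := by
    have e1 : ∀ᶠ t in nhdsWithin 0 (Set.Ioi 0), slope F 0 t < 0 :=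
      hslope.eventually_lt_const (by linarith)
    have e2 : ∀ᶠ t : ℝ in nhdsWithin 0 (Set.Ioi 0), 0 < t :=
      eventually_mem_nhdsWithin
    have e3 : ∀ᶠ t : ℝ in nhdsWithin 0 (Set.Ioi 0), t ≤ 1 := by
      refine Filter.Eventually.filter_mono nhdsWithin_le_nhds ?_
      exact eventually_le_nhds (by norm_num)
    exact e1.and (e2.and e3)
  obtain ⟨t, hs, ht0, ht1⟩ := hev.exists
  refine ⟨t, ht0, ht1, ?_⟩
  have hFt : F t < 1 := by
    have : (F t - F 0) / (t - 0) < 0 := by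
      rwa [slope_def_field] at hs
    rw [hF0] at this
    have := (div_neg_iff.mp this)
    rcases this with ⟨h1, h2⟩ | ⟨h1, h2⟩
    · linarith
    · linarith
  calc Real.exp (t * β) * ∑ p, q p * Real.exp (-(t * f p))
      = F t := by
        rw [hF, Finset.mul_sum]
        refine Finset.sum_congr rfl fun p _ => ?_
        rw [show Real.exp (t * β) * (q p * Real.exp (-(t * f p)))
            = q p * (Real.exp (t * β) * Real.exp (-(t * f p))) by ring,
          ← Real.exp_add]
        ring_nf
    _ < 1 := hFt

lemma tele_sum (S : ℕ → ℝ) (γ : ℝ) (n : ℕ) :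
    ∑ j ∈ Finset.range n, (if γ ≤ S j ∧ ∀ l, l < j → S l < γ then (1:ℝ) else 0)
      = 1 - (if ∀ l, l < n → S l < γ then (1:ℝ) else 0) := by
  classical
  induction n with
  | zero => simp
  | succ n ih =>
    rw [Finset.sum_range_succ, ih]
    by_cases h1 : ∀ l, l < n → S l < γ
    · by_cases h2 : γ ≤ S n
      · have h3 : ¬ (∀ l, l < n + 1 → S l < γ) :=
          fun h => absurd (h n (by omega)) (not_lt.mpr h2)
        have e1 : (if γ ≤ S n ∧ ∀ l, l < n → S l < γ then (1:ℝ) else 0) = 1 := if_pos ⟨h2, h1⟩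
        have e2 : (if ∀ l, l < n → S l < γ then (1:ℝ) else 0) = 1 := if_pos h1
        have e3 : (if ∀ l, l < n + 1 → S l < γ then (1:ℝ) else 0) = 0 := if_neg h3
        rw [e1, e2, e3]; ring
      · have h3 : ∀ l, l < n + 1 → S l < γ := by
          intro l hl
          rcases Nat.lt_succ_iff_lt_or_eq.mp hl with h | h
          · exact h1 l h
          · subst h; exact not_le.mp h2
        have e1 : (if γ ≤ S n ∧ ∀ l, l < n → S l < γ then (1:ℝ) else 0) = 0 :=
          if_neg (by tauto)
        have e2 : (if ∀ l, l < n → S l < γ then (1:ℝ) else 0) = 1 := if_pos h1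
        have e3 : (if ∀ l, l < n + 1 → S l < γ then (1:ℝ) else 0) = 1 := if_pos h3
        rw [e1, e2, e3]; ring
    · have h3 : ¬ (∀ l, l < n + 1 → S l < γ) := fun h => h1 (fun l hl => h l (by omega))
      have e1 : (if γ ≤ S n ∧ ∀ l, l < n → S l < γ then (1:ℝ) else 0) = 0 :=
        if_neg (by tauto)
      have e2 : (if ∀ l, l < n → S l < γ then (1:ℝ) else 0) = 0 := if_neg h1
      have e3 : (if ∀ l, l < n + 1 → S l < γ then (1:ℝ) else 0) = 0 := if_neg h3
      rw [e1, e2, e3]; ring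

lemma wald_path (ξ : ℕ → ℝ) (B γ : ℝ) (hB : ∀ k, ξ k ≤ B) (hγ : 0 < γ) (hB0 : 0 ≤ B) :
    ∀ n : ℕ, ∑ k ∈ Finset.range n,
      (if ∀ l, l ≤ k → (∑ i ∈ Finset.range l, ξ i) < γ then (1:ℝ) else 0) * ξ k ≤ γ + B := by
  classical
  intro n
  induction n with
  | zero => simp; linarith
  | succ n ih =>
    by_cases h : ∀ l, l ≤ n → (∑ i ∈ Finset.range l, ξ i) < γ
    · have hall : ∀ k ∈ Finset.range (n + 1),
          (if ∀ l, l ≤ k → (∑ i ∈ Finset.range l, ξ i) < γ then (1:ℝ) else 0) * ξ k = ξ k := by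
        intro k hk
        have hk' : k ≤ n := by
          have := Finset.mem_range.mp hk; omega
        rw [if_pos (fun l hl => h l (le_trans hl hk')), one_mul]
      rw [Finset.sum_congr rfl hall, Finset.sum_range_succ]
      have h1 : (∑ i ∈ Finset.range n, ξ i) < γ := h n le_rfl
      have h2 : ξ n ≤ B := hB n
      linarith
    · rw [Finset.sum_range_succ, if_neg h, zero_mul, add_zero]
      exact ih

lemma exp_max_le (s c t : ℝ) (ht : 0 < t) (hc : 0 ≤ c) :
    Real.exp (-(max s 0)) ≤ Real.exp (t * c - t * s) + Real.exp (-c) := by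
  by_cases h : c ≤ s
  · have h1 : Real.exp (-(max s 0)) ≤ Real.exp (-c) := by
      apply Real.exp_le_exp.mpr
      have : max s 0 = s := max_eq_left (le_trans hc h)
      rw [this]; linarith
    linarith [Real.exp_pos (t * c - t * s)]
  · have h1 : Real.exp (-(max s 0)) ≤ 1 := by
      apply Real.exp_le_one_iff.mpr
      simp [le_max_right]
    have h2 : (1:ℝ) ≤ Real.exp (t * c - t * s) := by
      have := Real.exp_le_exp.mpr (show (0:ℝ) ≤ t * c - t * s by nlinarith)
      rwa [Real.exp_zero] at this
    linarith [Real.exp_pos (-c)]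

lemma geomsum_inv_le (x : ℝ) (h0 : 0 ≤ x) (h1 : x < 1) (n : ℕ) :
    ∑ i ∈ Finset.range n, x ^ i ≤ (1 - x)⁻¹ := by
  rw [← tsum_geometric_of_lt_one h0 h1]
  exact Summable.sum_le_tsum _ (fun i _ => pow_nonneg h0 i) (summable_geometric_of_lt_one h0 h1)

lemma tri_sum (N : ℕ) (F : ℕ → ℕ → ℝ) :
    ∑ n ∈ Finset.range N, ∑ j ∈ Finset.range (n + 1), F j (n - j)
      = ∑ j ∈ Finset.range N, ∑ m ∈ Finset.range (N - j), F j m := by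
  have h := Finset.sum_Ico_Ico_comm 0 N (fun i j => F i (j - i))
  simp only [← Finset.range_eq_Ico] at h
  rw [← h]
  refine Finset.sum_congr rfl fun j hj => ?_
  rw [Finset.sum_Ico_eq_sum_range]
  exact Finset.sum_congr rfl fun m _ => by rw [Nat.add_sub_cancel_left]

open scoped Classical in
/-- partial sum of `f` over a tuple -/
noncomputable def sTup (f : P → ℝ) (n : ℕ) (v : ℕ → P) : ℝ := ∑ k ∈ Finset.range n, f (v k)

noncomputable def gU (f : P → ℝ) (γ : ℝ) (n : ℕ) (v : ℕ → P) : ℝ :=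
  if ∀ l, l ≤ n → sTup f l v < γ then 1 else 0

noncomputable def gA (f : P → ℝ) (γ : ℝ) (j : ℕ) (v : ℕ → P) : ℝ :=
  if γ ≤ sTup f j v ∧ ∀ l, l < j → sTup f l v < γ then 1 else 0

noncomputable def gD (f : P → ℝ) (m : ℕ) (v : ℕ → P) : ℝ :=
  Real.exp (-(max (sTup f m v) 0))

lemma sTup_read {f : P → ℝ} {n l : ℕ} (hl : l ≤ n) {v w : ℕ → P}
    (h : ∀ k, k < n → v k = w k) : sTup f l v = sTup f l w :=
  Finset.sum_congr rfl fun k hk => by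
    rw [h k (lt_of_lt_of_le (Finset.mem_range.mp hk) hl)]

lemma gU_read {f : P → ℝ} {γ : ℝ} {n : ℕ} {v w : ℕ → P}
    (h : ∀ k, k < n → v k = w k) : gU f γ n v = gU f γ n w := by
  unfold gU
  refine if_congr (forall_congr' fun l => ?_) rfl rfl
  constructor <;> intro hh hl <;> [rw [← sTup_read hl h]; rw [sTup_read hl h]] <;> exact hh hl

lemma gA_read {f : P → ℝ} {γ : ℝ} {j : ℕ} {v w : ℕ → P}
    (h : ∀ k, k < j → v k = w k) : gA f γ j v = gA f γ j w := by
  unfold gA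
  refine if_congr (and_congr ?_ (forall_congr' fun l => ?_)) rfl rfl
  · rw [sTup_read le_rfl h]
  · constructor <;> intro hh hl <;>
      [rw [← sTup_read (le_of_lt hl) h]; rw [sTup_read (le_of_lt hl) h]] <;> exact hh hl

lemma gD_read {f : P → ℝ} {m : ℕ} {v w : ℕ → P}
    (h : ∀ k, k < m → v k = w k) : gD f m v = gD f m w := by
  unfold gD; rw [sTup_read le_rfl h]

lemma gU_nonneg {f : P → ℝ} {γ : ℝ} {n : ℕ} {v : ℕ → P} : 0 ≤ gU f γ n v := by
  unfold gU; split <;> norm_num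

lemma gA_nonneg {f : P → ℝ} {γ : ℝ} {j : ℕ} {v : ℕ → P} : 0 ≤ gA f γ j v := by
  unfold gA; split <;> norm_num

lemma gA_partition (f : P → ℝ) (γ : ℝ) (v : ℕ → P) (n : ℕ) :
    (∑ j ∈ Finset.range (n + 1), gA f γ j v) + gU f γ n v = 1 := by
  have h2 : ∑ j ∈ Finset.range (n + 1), gA f γ j v
      = 1 - (if ∀ l, l < n + 1 → sTup f l v < γ then (1:ℝ) else 0) :=
    tele_sum (fun l => sTup f l v) γ (n + 1)
  have e : (if ∀ l, l < n + 1 → sTup f l v < γ then (1:ℝ) else 0) = gU f γ n v := by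
    unfold gU
    exact if_congr (by constructor <;> intro h l hl <;> exact h l (by omega)) rfl rfl
  rw [h2, e]; ring

lemma gA_sum_le_one (f : P → ℝ) (γ : ℝ) (v : ℕ → P) (N : ℕ) :
    ∑ j ∈ Finset.range N, gA f γ j v ≤ 1 := by
  have h2 : ∑ j ∈ Finset.range N, gA f γ j v
      = 1 - (if ∀ l, l < N → sTup f l v < γ then (1:ℝ) else 0) :=
    tele_sum (fun l => sTup f l v) γ N
  have e : (0:ℝ) ≤ if ∀ l, l < N → sTup f l v < γ then (1:ℝ) else 0 := by
    split <;> norm_num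
  rw [h2]; linarith

lemma gU_wald (f : P → ℝ) (γ B : ℝ) (hfB : ∀ p, f p ≤ B) (hγ : 0 < γ) (hB0 : 0 ≤ B)
    (v : ℕ → P) (n : ℕ) :
    ∑ k ∈ Finset.range n, gU f γ k v * f (v k) ≤ γ + B :=
  wald_path (fun k => f (v k)) B γ (fun k => hfB _) hγ hB0 n

lemma gA_mul_exp_le (f : P → ℝ) (γ : ℝ) (j : ℕ) (v : ℕ → P) (x : ℝ) :
    gA f γ j v * Real.exp (-(max (x - γ) 0)) ≤ gA f γ j v * Real.exp (-(max (x - sTup f j v) 0)) := by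
  unfold gA
  split
  · next h =>
    rw [one_mul, one_mul]
    refine Real.exp_le_exp.mpr (neg_le_neg (max_le_max (by linarith [h.1]) le_rfl))
  · rw [zero_mul, zero_mul]

lemma ESum_congr (q : P → ℝ) (m : ℕ) {g g' : (ℕ → P) → ℝ} (h : ∀ v, g v = g' v) :
    ESum q m g = ESum q m g' := by
  unfold ESum; exact Finset.sum_congr rfl fun v _ => by rw [h]

lemma ESum_one (q : P → ℝ) (hq1 : ∑ p, q p = 1) (m : ℕ) :
    ESum q m (fun _ => 1) = 1 := by
  unfold ESum
  simp only [mul_one]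
  have := Finset.prod_univ_sum (fun _ : Fin m => (Finset.univ : Finset P)) (fun _ p => q p)
  rw [Fintype.piFinset_univ] at this
  rw [← this, Finset.prod_const, hq1, one_pow]

lemma ESum_single (q g : P → ℝ) : ESum q 1 (fun w => g (w 0)) = ∑ p, q p * g p := by
  unfold ESum
  refine Fintype.sum_equiv (Equiv.funUnique (Fin 1) P) _ _ fun w => ?_
  simp only [Equiv.funUnique_apply]
  rw [Fin.prod_univ_one, extT_lt _ (by norm_num : (0:ℕ) < 1)]
  rfl

section Meas

variable [MeasurableSpace P] [DiscreteMeasurableSpace P]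
variable {Ω : Type*} [MeasurableSpace Ω] {μ : MeasureTheory.Measure Ω}
  [MeasureTheory.IsProbabilityMeasure μ]

lemma master (q : P → ℝ) (Z : ℕ → Ω → P)
    (hZm : ∀ k, Measurable (Z k))
    (hind : iIndepFun Z μ)
    (hlaw : ∀ k p, μ (Z k ⁻¹' {p}) = ENNReal.ofReal (q p))
    (hq0 : ∀ p, 0 ≤ q p)
    (j m : ℕ) (g : (ℕ → P) → ℝ) (hg : ∀ v w, (∀ k, k < m → v k = w k) → g v = g w) :
    Integrable (fun ω => g (fun k => Z (j + k) ω)) μ ∧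
    ∫ ω, g (fun k => Z (j + k) ω) ∂μ
      = ∑ v : Fin m → P, (∏ k, q (v k)) * g (extT m v) := by
  classical
  set T : Ω → (Fin m → P) := fun ω k => Z (j + (k : ℕ)) ω with hT
  have hTm : Measurable T := measurable_pi_lambda _ (fun k => hZm (j + (k : ℕ)))
  have hkey : (fun ω => g (fun k => Z (j + k) ω)) = (fun x => g (extT m x)) ∘ T := by
    funext ω
    exact hg _ _ (fun k hk => by simp [hT, extT_lt _ hk])
  have hGm : Measurable (fun x : Fin m → P => g (extT m x)) := measurable_of_finite _
  have hmap : ∀ v : Fin m → P, μ.map T {v} = ENNReal.ofReal (∏ k, q (v k)) := by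
    intro v
    rw [Measure.map_apply hTm (measurableSet_singleton v)]
    have hset : T ⁻¹' {v} = ⋂ i ∈ Finset.Ico j (j + m), Z i ⁻¹' {extT m v (i - j)} := by
      ext ω
      simp only [Set.mem_preimage, Set.mem_singleton_iff, funext_iff, Set.mem_iInter,
        Finset.mem_Ico]
      constructor
      · rintro h i ⟨hij, him⟩
        have hlt : i - j < m := by omega
        rw [extT_lt _ hlt]
        have heq : j + (i - j) = i := by omega
        have := h ⟨i - j, hlt⟩
        simp only [hT] at this
        rw [heq] at this
        exact this
      · intro h k
        have := h (j + (k : ℕ)) ⟨by omega, by omega⟩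
        rwa [Nat.add_sub_cancel_left, extT_lt _ k.2, Fin.eta] at this
    rw [hset, hind.measure_inter_preimage_eq_mul (Finset.Ico j (j + m))
      (fun i _ => measurableSet_singleton _)]
    have : ∀ i ∈ Finset.Ico j (j + m), μ (Z i ⁻¹' {extT m v (i - j)})
        = ENNReal.ofReal (q (extT m v (i - j))) := fun i _ => hlaw _ _
    rw [Finset.prod_congr rfl this, Finset.prod_Ico_eq_prod_range]
    simp only [Nat.add_sub_cancel_left]
    rw [← ENNReal.ofReal_prod_of_nonneg (fun i _ => hq0 _)]
    congr 1
    rw [← Fin.prod_univ_eq_prod_range (fun k => q (extT m v k))]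
    exact Finset.prod_congr rfl (fun k _ => by rw [extT_lt _ k.2, Fin.eta])
  have hGint : Integrable (fun x : Fin m → P => g (extT m x)) (μ.map T) :=
    Integrable.of_finite
  constructor
  · rw [hkey]
    exact (integrable_map_measure hGm.aestronglyMeasurable hTm.aemeasurable).mp hGint
  · rw [hkey]
    show ∫ ω, (fun x => g (extT m x)) (T ω) ∂μ = _
    rw [← integral_map hTm.aemeasurable hGm.aestronglyMeasurable,
      integral_fintype _]
    refine Finset.sum_congr rfl (fun v _ => ?_)
    rw [measureReal_def, hmap v, ENNReal.toReal_ofReal (Finset.prod_nonneg (fun k _ => hq0 _)), smul_eq_mul]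
    exact hGint


lemma master' (q : P → ℝ) (Z : ℕ → Ω → P)
    (hZm : ∀ k, Measurable (Z k))
    (hind : ProbabilityTheory.iIndepFun Z μ)
    (hlaw : ∀ k p, μ (Z k ⁻¹' {p}) = ENNReal.ofReal (q p))
    (hq0 : ∀ p, 0 ≤ q p)
    (j m : ℕ) (g : (ℕ → P) → ℝ) (hg : ∀ v w, (∀ k, k < m → v k = w k) → g v = g w) :
    MeasureTheory.Integrable (fun ω => g (fun k => Z (j + k) ω)) μ ∧
    ∫ ω, g (fun k => Z (j + k) ω) ∂μ = ESum q m g :=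
  master q Z hZm hind hlaw hq0 j m g hg

set_option maxHeartbeats 2000000 in
theorem core (q f : P → ℝ) (Z : ℕ → Ω → P)
    (hZm : ∀ k, Measurable (Z k))
    (hind : ProbabilityTheory.iIndepFun Z μ)
    (hlaw : ∀ k p, μ (Z k ⁻¹' {p}) = ENNReal.ofReal (q p))
    (hqpos : ∀ p, 0 < q p) (hq1 : ∑ p, q p = 1)
    (C : ℝ) (hC : 0 < C) (hCq : ∑ p, q p * f p = C)
    (Δ : ℝ) (hΔpos : 0 < Δ) (hΔC : Δ < C) :
    ∃ a M₀ : ℝ, ∀ M : ℝ, M₀ ≤ M →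
      (μ {ω | sTup f ⌈Real.log M / (C - Δ)⌉₊ (fun k => Z k ω) < Real.log M}).toReal ≤ 1/2 ∧
      (1 - (μ {ω | sTup f ⌈Real.log M / (C - Δ)⌉₊ (fun k => Z k ω) < Real.log M}).toReal)⁻¹
        * ∑ n ∈ Finset.range ⌈Real.log M / (C - Δ)⌉₊,
            ∫ ω, Real.exp (-(max (sTup f n (fun k => Z k ω) - Real.log M) 0)) ∂μ
        ≤ Real.log M / C + a := by
  classical
  have hq0 : ∀ p, 0 ≤ q p := fun p => (hqpos p).le
  obtain ⟨p₀, -, hp₀⟩ := Finset.exists_max_image Finset.univ f Finset.univ_nonempty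
  set B : ℝ := max (f p₀) 0 with hBdef
  have hfB : ∀ p, f p ≤ B := fun p => le_trans (hp₀ p (Finset.mem_univ p)) (le_max_left _ _)
  have hB0 : (0:ℝ) ≤ B := le_max_right _ _
  obtain ⟨t, ht0, -, hrlt⟩ := exists_good_t q f hq1 (C - Δ) C hCq (by linarith)
  set r : ℝ := Real.exp (t * (C - Δ)) * ∑ p, q p * Real.exp (-(t * f p)) with hrdef
  have hρ0 : 0 < ∑ p, q p * Real.exp (-(t * f p)) :=
    Finset.sum_pos (fun p _ => mul_pos (hqpos p) (Real.exp_pos _)) Finset.univ_nonempty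
  have hr0 : 0 < r := mul_pos (Real.exp_pos _) hρ0
  obtain ⟨t', ht'0, -, hr'lt⟩ := exists_good_t q f hq1 (C / 2) C hCq (by linarith)
  set r' : ℝ := Real.exp (t' * (C / 2)) * ∑ p, q p * Real.exp (-(t' * f p)) with hr'def
  have hρ'0 : 0 < ∑ p, q p * Real.exp (-(t' * f p)) :=
    Finset.sum_pos (fun p _ => mul_pos (hqpos p) (Real.exp_pos _)) Finset.univ_nonempty
  have hr'0 : 0 < r' := mul_pos (Real.exp_pos _) hρ'0
  set sc : ℝ := Real.exp (-(C / 2)) with hscdef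
  have hsc0 : 0 < sc := Real.exp_pos _
  have hsc1 : sc < 1 := by
    have := Real.exp_lt_exp.mpr (show -(C/2) < 0 by linarith)
    rwa [Real.exp_zero] at this
  set K : ℝ := (1 - r')⁻¹ + (1 - sc)⁻¹ with hKdef
  have hK0 : 0 ≤ K := add_nonneg (inv_nonneg.mpr (by linarith)) (inv_nonneg.mpr (by linarith))
  set c : ℝ := -Real.log r / (C - Δ) with hcdef
  have hc0 : 0 < c := div_pos (neg_pos.mpr (Real.log_neg hr0 hrlt)) (by linarith)
  -- eventual conditions in γ
  have hmulT : Filter.Tendsto (fun γ : ℝ => c * γ) Filter.atTop Filter.atTop :=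
    Filter.Tendsto.const_mul_atTop hc0 Filter.tendsto_id
  have hexp0 : Filter.Tendsto (fun γ : ℝ => Real.exp (-(c * γ))) Filter.atTop (nhds 0) :=
    Real.tendsto_exp_atBot.comp (Filter.tendsto_neg_atTop_atBot.comp hmulT)
  have hlin0 : Filter.Tendsto (fun γ : ℝ => (c * γ) * Real.exp (-(c * γ)))
      Filter.atTop (nhds 0) := by
    have h := (Real.tendsto_pow_mul_exp_neg_atTop_nhds_zero 1).comp hmulT
    simpa [Function.comp_def] using h
  have hmain0 : Filter.Tendsto (fun γ : ℝ => 2 * Real.exp (-(c * γ)) * ((γ + B)/C + K))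
      Filter.atTop (nhds 0) := by
    have h := (hlin0.const_mul (2 / (c * C))).add (hexp0.const_mul (2 * (B / C + K)))
    rw [mul_zero, mul_zero, add_zero] at h
    refine h.congr fun γ => ?_
    field_simp
    ring
  have hev : ∀ᶠ γ : ℝ in Filter.atTop, 0 < γ ∧ Real.exp (-(c * γ)) ≤ 1/2 ∧
      2 * Real.exp (-(c * γ)) * ((γ + B)/C + K) ≤ 1 := by
    refine (Filter.eventually_gt_atTop 0).and (Filter.Eventually.and ?_ ?_)
    · exact (hexp0.eventually_lt_const (by norm_num : (0:ℝ) < 1/2)).mono fun x hx => hx.le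
    · exact (hmain0.eventually_lt_const one_pos).mono fun x hx => hx.le
  obtain ⟨γ₀, hγ₀⟩ := Filter.eventually_atTop.mp hev
  refine ⟨B / C + K + 1, Real.exp γ₀, fun M hM => ?_⟩
  have hM0 : 0 < M := lt_of_lt_of_le (Real.exp_pos γ₀) hM
  obtain ⟨hγpos, hexphalf, hexp1⟩ := hγ₀ (Real.log M) ((Real.le_log_iff_exp_le hM0).mpr hM)
  set γ : ℝ := Real.log M with hγdef
  set N : ℕ := ⌈γ / (C - Δ)⌉₊ with hNdef
  have hγN : γ ≤ (N : ℝ) * (C - Δ) := by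
    have h := Nat.le_ceil (γ / (C - Δ))
    rw [div_le_iff₀ (by linarith : (0:ℝ) < C - Δ)] at h
    exact h
  have HM := fun (j m : ℕ) (g : (ℕ → P) → ℝ)
    (hg : ∀ v w, (∀ k, k < m → v k = w k) → g v = g w) =>
      master' q Z hZm hind hlaw hq0 j m g hg
  -- measurability of partial sums
  have hs_meas : ∀ n : ℕ, Measurable (fun ω => sTup f n (fun k => Z k ω)) := by
    intro n
    apply Finset.measurable_sum
    exact fun k _ => (measurable_of_finite f).comp (hZm k)
  -- step 1 : probability bound
  have hAmeas : MeasurableSet {ω | sTup f N (fun k => Z k ω) < γ} :=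
    measurableSet_lt (hs_meas N) measurable_const
  set p : ℝ := (μ {ω | sTup f N (fun k => Z k ω) < γ}).toReal with hpdef
  have hp0 : 0 ≤ p := ENNReal.toReal_nonneg
  have hpm : p ≤ Real.exp (-(c * γ)) := by
    have hg : ∀ v w : ℕ → P, (∀ k, k < N → v k = w k) →
        Real.exp (t * γ - t * sTup f N v) = Real.exp (t * γ - t * sTup f N w) := by
      intro v w h; rw [sTup_read le_rfl h]
    have hm := HM 0 N (fun v => Real.exp (t * γ - t * sTup f N v)) hg
    simp only [zero_add] at hm
    obtain ⟨hint, heq⟩ := hm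
    have hmono : ∀ ω, Set.indicator {ω | sTup f N (fun k => Z k ω) < γ} (fun _ => (1:ℝ)) ω
        ≤ Real.exp (t * γ - t * sTup f N (fun k => Z k ω)) := by
      intro ω
      by_cases h : ω ∈ {ω | sTup f N (fun k => Z k ω) < γ}
      · rw [Set.indicator_of_mem h]
        have hω : sTup f N (fun k => Z k ω) < γ := h
        have hnn : (0:ℝ) ≤ t * γ - t * sTup f N (fun k => Z k ω) := by nlinarith
        calc (1:ℝ) = Real.exp 0 := Real.exp_zero.symm
          _ ≤ _ := Real.exp_le_exp.mpr hnn
      · rw [Set.indicator_of_notMem h]; positivity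
    have h1 : p ≤ Real.exp (t * γ) * (∑ p, q p * Real.exp (-(t * f p))) ^ N := by
      have h2 : p = ∫ ω, Set.indicator {ω | sTup f N (fun k => Z k ω) < γ}
          (fun _ => (1:ℝ)) ω ∂μ := by
        rw [MeasureTheory.integral_indicator_const (1:ℝ) hAmeas, smul_eq_mul, mul_one, hpdef, measureReal_def]
      rw [h2]
      calc ∫ ω, Set.indicator {ω | sTup f N (fun k => Z k ω) < γ} (fun _ => (1:ℝ)) ω ∂μ
          ≤ ∫ ω, Real.exp (t * γ - t * sTup f N (fun k => Z k ω)) ∂μ :=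
            MeasureTheory.integral_mono
              ((MeasureTheory.integrable_const (1:ℝ)).indicator hAmeas) hint hmono
        _ = ESum q N (fun v => Real.exp (t * γ - t * sTup f N v)) := heq
        _ = Real.exp (t * γ) * (∑ p, q p * Real.exp (-(t * f p))) ^ N :=
            ESum_exp q f t (t * γ) N
    have h3 : Real.exp (t * γ) * (∑ p, q p * Real.exp (-(t * f p))) ^ N ≤ r ^ N := by
      rw [hrdef, mul_pow, ← Real.exp_nat_mul]
      refine mul_le_mul_of_nonneg_right ?_ (pow_nonneg hρ0.le N)
      refine Real.exp_le_exp.mpr ?_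
      nlinarith
    have h4 : r ^ N ≤ Real.exp (-(c * γ)) := by
      have h5 : r ^ N = Real.exp ((N:ℝ) * Real.log r) := by
        rw [Real.exp_nat_mul, Real.exp_log hr0]
      rw [h5]
      refine Real.exp_le_exp.mpr ?_
      have h6 : γ / (C - Δ) ≤ (N:ℝ) := Nat.le_ceil _
      have h7 : Real.log r < 0 := Real.log_neg hr0 hrlt
      have h8 : (N:ℝ) * Real.log r ≤ (γ / (C - Δ)) * Real.log r :=
        mul_le_mul_of_nonpos_right h6 h7.le
      refine le_trans h8 (le_of_eq ?_)
      rw [hcdef]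
      field_simp
    exact le_trans (le_trans h1 h3) h4
  have hphalf : p ≤ 1/2 := le_trans hpm hexphalf
  constructor
  · exact hphalf
  -- step 2 : the expected-sum bound
  · -- D bound
    have hDle : ∀ m : ℕ, ESum q m (gD f m) ≤ r' ^ m + sc ^ m := by
      intro m
      have step : ESum q m (gD f m)
          ≤ ESum q m (fun v => Real.exp (t' * ((m:ℝ) * (C/2)) - t' * sTup f m v)
              + Real.exp (-((m:ℝ) * (C/2)) - 0 * sTup f m v)) := by
        refine ESum_mono hq0 fun v => ?_
        have h := exp_max_le (sTup f m v) ((m:ℝ) * (C/2)) t' ht'0 (by positivity)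
        calc gD f m v ≤ Real.exp (t' * ((m:ℝ) * (C/2)) - t' * sTup f m v)
              + Real.exp (-((m:ℝ) * (C/2))) := h
          _ = _ := by rw [zero_mul, sub_zero]
      have e1 : ESum q m (fun v => Real.exp (t' * ((m:ℝ) * (C/2)) - t' * sTup f m v))
          = Real.exp (t' * ((m:ℝ) * (C/2))) * (∑ p, q p * Real.exp (-(t' * f p))) ^ m :=
        ESum_exp q f t' (t' * ((m:ℝ) * (C/2))) m
      have e2 : ESum q m (fun v => Real.exp (-((m:ℝ) * (C/2)) - 0 * sTup f m v))
          = Real.exp (-((m:ℝ) * (C/2))) * (∑ p, q p * Real.exp (-(0 * f p))) ^ m :=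
        ESum_exp q f 0 (-((m:ℝ) * (C/2))) m
      have e3 : (∑ p, q p * Real.exp (-(0 * f p))) = 1 := by
        simp only [zero_mul, neg_zero, Real.exp_zero, mul_one]; exact hq1
      have e4 : Real.exp (t' * ((m:ℝ) * (C/2))) = Real.exp (t' * (C/2)) ^ m := by
        rw [← Real.exp_nat_mul]; ring_nf
      have e5 : Real.exp (-((m:ℝ) * (C/2))) = sc ^ m := by
        rw [hscdef, ← Real.exp_nat_mul]; ring_nf
      calc ESum q m (gD f m) ≤ _ := step
        _ = r' ^ m + sc ^ m := by
          rw [ESum_add, e1, e2, e3, e4, e5, one_pow, mul_one, hr'def, mul_pow]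
    have hDsum : ∀ L : ℕ, ∑ m ∈ Finset.range L, ESum q m (gD f m) ≤ K := by
      intro L
      calc ∑ m ∈ Finset.range L, ESum q m (gD f m)
          ≤ ∑ m ∈ Finset.range L, (r' ^ m + sc ^ m) := Finset.sum_le_sum fun m _ => hDle m
        _ = (∑ m ∈ Finset.range L, r' ^ m) + ∑ m ∈ Finset.range L, sc ^ m :=
            Finset.sum_add_distrib
        _ ≤ (1 - r')⁻¹ + (1 - sc)⁻¹ :=
            add_le_add (geomsum_inv_le r' hr'0.le hr'lt L) (geomsum_inv_le sc hsc0.le hsc1 L)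
        _ = K := hKdef.symm
    have hA0 : ∀ j : ℕ, 0 ≤ ESum q j (gA f γ j) :=
      fun j => ESum_nonneg hq0 fun v => gA_nonneg
    have hD0 : ∀ m : ℕ, 0 ≤ ESum q m (gD f m) :=
      fun m => ESum_nonneg hq0 fun v => (Real.exp_pos _).le
    -- integral identities
    have hUint : ∀ n : ℕ, MeasureTheory.Integrable (fun ω => gU f γ n (fun k => Z k ω)) μ
        ∧ ∫ ω, gU f γ n (fun k => Z k ω) ∂μ = ESum q n (gU f γ n) := by
      intro n
      have hm := HM 0 n (gU f γ n) (fun v w h => gU_read h)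
      simpa only [zero_add] using hm
    have hAint : ∀ j : ℕ, MeasureTheory.Integrable (fun ω => gA f γ j (fun k => Z k ω)) μ
        ∧ ∫ ω, gA f γ j (fun k => Z k ω) ∂μ = ESum q j (gA f γ j) := by
      intro j
      have hm := HM 0 j (gA f γ j) (fun v w h => gA_read h)
      simpa only [zero_add] using hm
    have hWaldTerm : ∀ k : ℕ,
        MeasureTheory.Integrable (fun ω => gU f γ k (fun i => Z i ω) * f (Z k ω)) μ ∧
        ∫ ω, gU f γ k (fun i => Z i ω) * f (Z k ω) ∂μ = ESum q k (gU f γ k) * C := by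
      intro k
      have hg : ∀ v w : ℕ → P, (∀ i, i < k + 1 → v i = w i) →
          gU f γ k v * f (v k) = gU f γ k w * f (w k) := by
        intro v w h
        rw [gU_read (fun i hi => h i (by omega)), h k (by omega)]
      have hm := HM 0 (k + 1) (fun v => gU f γ k v * f (v k)) hg
      simp only [zero_add] at hm
      refine ⟨hm.1, ?_⟩
      rw [hm.2]
      have heq : (fun v : ℕ → P => gU f γ k v * f (v k))
          = (fun v => gU f γ k v * (fun w : ℕ → P => f (w 0)) (fun i => v (k + i))) := by
        funext v; simp
      rw [ESum_congr q (k + 1) (fun v => congrFun heq v),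
        ESum_split q k 1 (gU f γ k) (fun w => f (w 0))
          (fun v w h => gU_read h) (fun v w h => congrArg f (h 0 (by omega))),
        ESum_single q f, hCq]
    -- Wald bound
    have hUsum : ∑ n ∈ Finset.range N, ESum q n (gU f γ n) ≤ (γ + B) / C := by
      rw [le_div_iff₀ hC]
      have h1 : ∫ ω, ∑ k ∈ Finset.range N, gU f γ k (fun i => Z i ω) * f (Z k ω) ∂μ
          = ∑ k ∈ Finset.range N, ESum q k (gU f γ k) * C := by
        rw [MeasureTheory.integral_finset_sum _ (fun k _ => (hWaldTerm k).1)]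
        exact Finset.sum_congr rfl fun k _ => (hWaldTerm k).2
      have h2 : ∫ ω, ∑ k ∈ Finset.range N, gU f γ k (fun i => Z i ω) * f (Z k ω) ∂μ
          ≤ γ + B := by
        calc ∫ ω, ∑ k ∈ Finset.range N, gU f γ k (fun i => Z i ω) * f (Z k ω) ∂μ
            ≤ ∫ _, (γ + B : ℝ) ∂μ :=
              MeasureTheory.integral_mono
                (MeasureTheory.integrable_finset_sum _ (fun k _ => (hWaldTerm k).1))
                (MeasureTheory.integrable_const _)
                (fun ω => gU_wald f γ B hfB hγpos hB0 _ N)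
          _ = γ + B := by simp
      calc (∑ n ∈ Finset.range N, ESum q n (gU f γ n)) * C
          = ∑ k ∈ Finset.range N, ESum q k (gU f γ k) * C := Finset.sum_mul _ _ _
        _ = _ := h1.symm
        _ ≤ γ + B := h2
    -- A-sum bound
    have hAsum : ∑ j ∈ Finset.range N, ESum q j (gA f γ j) ≤ 1 := by
      have h1 : ∑ j ∈ Finset.range N, ESum q j (gA f γ j)
          = ∫ ω, ∑ j ∈ Finset.range N, gA f γ j (fun k => Z k ω) ∂μ := by
        rw [MeasureTheory.integral_finset_sum _ (fun j _ => (hAint j).1)]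
        exact (Finset.sum_congr rfl fun j _ => ((hAint j).2).symm)
      rw [h1]
      calc ∫ ω, ∑ j ∈ Finset.range N, gA f γ j (fun k => Z k ω) ∂μ
          ≤ ∫ _, (1:ℝ) ∂μ :=
            MeasureTheory.integral_mono
              (MeasureTheory.integrable_finset_sum _ (fun j _ => (hAint j).1))
              (MeasureTheory.integrable_const _)
              (fun ω => gA_sum_le_one f γ _ N)
        _ = 1 := by simp
    -- split integrals A·D
    have hsplitAD : ∀ j m' : ℕ,
        MeasureTheory.Integrable
          (fun ω => gA f γ j (fun k => Z k ω) * gD f m' (fun k => Z (j + k) ω)) μ ∧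
        ∫ ω, gA f γ j (fun k => Z k ω) * gD f m' (fun k => Z (j + k) ω) ∂μ
          = ESum q j (gA f γ j) * ESum q m' (gD f m') := by
      intro j m'
      have hg : ∀ v w : ℕ → P, (∀ k, k < j + m' → v k = w k) →
          gA f γ j v * gD f m' (fun k => v (j + k))
            = gA f γ j w * gD f m' (fun k => w (j + k)) := by
        intro v w h
        rw [gA_read (fun k hk => h k (by omega)), gD_read (fun k hk => h (j + k) (by omega))]
      have hm := HM 0 (j + m') (fun v => gA f γ j v * gD f m' (fun k => v (j + k))) hg
      simp only [zero_add] at hm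
      refine ⟨hm.1, ?_⟩
      rw [hm.2]
      exact ESum_split q j m' (gA f γ j) (gD f m')
        (fun v w h => gA_read h) (fun v w h => gD_read h)
    -- per-n bound
    have hEn : ∀ n : ℕ,
        ∫ ω, Real.exp (-(max (sTup f n (fun k => Z k ω) - γ) 0)) ∂μ
          ≤ (∑ j ∈ Finset.range (n + 1),
              ESum q j (gA f γ j) * ESum q (n - j) (gD f (n - j)))
            + ESum q n (gU f γ n) := by
      intro n
      have hALL : ∀ j, j < n + 1 → ∀ ω : Ω,
          gA f γ j (fun k => Z k ω) * gD f (n - j) (fun k => Z (j + k) ω)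
            = gA f γ j (fun k => Z k ω) *
              Real.exp (-(max (sTup f n (fun k => Z k ω) - sTup f j (fun k => Z k ω)) 0)) := by
        intro j hj ω
        have hd : sTup f j (fun k => Z k ω) + sTup f (n - j) (fun k => Z (j + k) ω)
            = sTup f n (fun k => Z k ω) := by
          unfold sTup
          rw [← Finset.sum_range_add (fun k => f (Z k ω)) j (n - j),
            Nat.add_sub_cancel' (by omega : j ≤ n)]
        congr 1
        unfold gD
        rw [show sTup f n (fun k => Z k ω) - sTup f j (fun k => Z k ω)
          = sTup f (n - j) (fun k => Z (j + k) ω) by linarith]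
      have hpt : ∀ ω : Ω, Real.exp (-(max (sTup f n (fun k => Z k ω) - γ) 0))
          ≤ (∑ j ∈ Finset.range (n + 1),
              gA f γ j (fun k => Z k ω) * gD f (n - j) (fun k => Z (j + k) ω))
            + gU f γ n (fun k => Z k ω) := by
        intro ω
        have hpar := gA_partition f γ (fun k => Z k ω) n
        have hexp1' : Real.exp (-(max (sTup f n (fun k => Z k ω) - γ) 0)) ≤ 1 :=
          Real.exp_le_one_iff.mpr (by simp [le_max_right])
        calc Real.exp (-(max (sTup f n (fun k => Z k ω) - γ) 0))
            = ((∑ j ∈ Finset.range (n + 1), gA f γ j (fun k => Z k ω))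
                + gU f γ n (fun k => Z k ω))
              * Real.exp (-(max (sTup f n (fun k => Z k ω) - γ) 0)) := by rw [hpar, one_mul]
          _ = (∑ j ∈ Finset.range (n + 1), gA f γ j (fun k => Z k ω)
                * Real.exp (-(max (sTup f n (fun k => Z k ω) - γ) 0)))
              + gU f γ n (fun k => Z k ω)
                * Real.exp (-(max (sTup f n (fun k => Z k ω) - γ) 0)) := by
              rw [add_mul, Finset.sum_mul]
          _ ≤ _ := by
              refine add_le_add (Finset.sum_le_sum fun j hj => ?_) ?_
              · rw [hALL j (Finset.mem_range.mp hj) ω]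
                exact gA_mul_exp_le f γ j _ _
              · calc gU f γ n (fun k => Z k ω)
                    * Real.exp (-(max (sTup f n (fun k => Z k ω) - γ) 0))
                    ≤ gU f γ n (fun k => Z k ω) * 1 :=
                      mul_le_mul_of_nonneg_left hexp1' gU_nonneg
                  _ = gU f γ n (fun k => Z k ω) := mul_one _
      have hLint : MeasureTheory.Integrable
          (fun ω => Real.exp (-(max (sTup f n (fun k => Z k ω) - γ) 0))) μ := by
        have hm := HM 0 n (fun v => Real.exp (-(max (sTup f n v - γ) 0)))
          (fun v w h => by beta_reduce; rw [sTup_read le_rfl h])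
        simpa only [zero_add] using hm.1
      have hRint : MeasureTheory.Integrable
          (fun ω => (∑ j ∈ Finset.range (n + 1),
              gA f γ j (fun k => Z k ω) * gD f (n - j) (fun k => Z (j + k) ω))
            + gU f γ n (fun k => Z k ω)) μ :=
        (MeasureTheory.integrable_finset_sum _ (fun j _ => (hsplitAD j (n - j)).1)).add
          (hUint n).1
      calc ∫ ω, Real.exp (-(max (sTup f n (fun k => Z k ω) - γ) 0)) ∂μ
          ≤ ∫ ω, ((∑ j ∈ Finset.range (n + 1),
              gA f γ j (fun k => Z k ω) * gD f (n - j) (fun k => Z (j + k) ω))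
            + gU f γ n (fun k => Z k ω)) ∂μ :=
            MeasureTheory.integral_mono hLint hRint hpt
        _ = _ := by
            rw [MeasureTheory.integral_add
                (MeasureTheory.integrable_finset_sum _ (fun j _ => (hsplitAD j (n - j)).1))
                (hUint n).1,
              MeasureTheory.integral_finset_sum _ (fun j _ => (hsplitAD j (n - j)).1),
              (hUint n).2]
            congr 1
            exact Finset.sum_congr rfl fun j _ => (hsplitAD j (n - j)).2
    -- total bound
    have hTri : ∑ n ∈ Finset.range N,
        ((∑ j ∈ Finset.range (n + 1),
            ESum q j (gA f γ j) * ESum q (n - j) (gD f (n - j)))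
          + ESum q n (gU f γ n)) ≤ K + (γ + B) / C := by
      rw [Finset.sum_add_distrib]
      refine add_le_add ?_ hUsum
      rw [tri_sum N (fun j m => ESum q j (gA f γ j) * ESum q m (gD f m))]
      calc ∑ j ∈ Finset.range N, ∑ m ∈ Finset.range (N - j),
            ESum q j (gA f γ j) * ESum q m (gD f m)
          = ∑ j ∈ Finset.range N,
              ESum q j (gA f γ j) * ∑ m ∈ Finset.range (N - j), ESum q m (gD f m) := by
            exact Finset.sum_congr rfl fun j _ => (Finset.mul_sum _ _ _).symm
        _ ≤ ∑ j ∈ Finset.range N, ESum q j (gA f γ j) * K :=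
            Finset.sum_le_sum fun j _ => mul_le_mul_of_nonneg_left (hDsum _) (hA0 j)
        _ = (∑ j ∈ Finset.range N, ESum q j (gA f γ j)) * K := (Finset.sum_mul _ _ _).symm
        _ ≤ 1 * K := mul_le_mul_of_nonneg_right hAsum hK0
        _ = K := one_mul K
    have hSum : (∑ n ∈ Finset.range N,
        ∫ ω, Real.exp (-(max (sTup f n (fun k => Z k ω) - γ) 0)) ∂μ) ≤ K + (γ + B) / C :=
      le_trans (Finset.sum_le_sum fun n _ => hEn n) hTri
    have hSum0 : 0 ≤ ∑ n ∈ Finset.range N,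
        ∫ ω, Real.exp (-(max (sTup f n (fun k => Z k ω) - γ) 0)) ∂μ :=
      Finset.sum_nonneg fun n _ =>
        MeasureTheory.integral_nonneg fun ω => (Real.exp_pos _).le
    -- wrap up
    have h1p : (0:ℝ) < 1 - p := by linarith
    have hinv : (1 - p)⁻¹ ≤ 1 + 2 * p := by
      have h2 : (1:ℝ) ≤ (1 + 2 * p) * (1 - p) := by nlinarith
      calc (1 - p)⁻¹ = 1 * (1 - p)⁻¹ := (one_mul _).symm
        _ ≤ ((1 + 2 * p) * (1 - p)) * (1 - p)⁻¹ :=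
            mul_le_mul_of_nonneg_right h2 (inv_nonneg.mpr h1p.le)
        _ = 1 + 2 * p := by field_simp
    have step2 : 2 * p * (K + (γ + B) / C) ≤ 1 := by
      have hmul : 2 * p * ((γ + B) / C + K) ≤ 2 * Real.exp (-(c * γ)) * ((γ + B) / C + K) := by
        refine mul_le_mul_of_nonneg_right ?_ (by positivity)
        linarith
      calc 2 * p * (K + (γ + B) / C) = 2 * p * ((γ + B) / C + K) := by ring
        _ ≤ 2 * Real.exp (-(c * γ)) * ((γ + B) / C + K) := hmul
        _ ≤ 1 := hexp1
    calc (1 - p)⁻¹ * ∑ n ∈ Finset.range N,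
          ∫ ω, Real.exp (-(max (sTup f n (fun k => Z k ω) - γ) 0)) ∂μ
        ≤ (1 + 2 * p) * (K + (γ + B) / C) :=
          mul_le_mul hinv hSum hSum0 (by linarith)
      _ = (K + (γ + B) / C) + 2 * p * (K + (γ + B) / C) := by ring
      _ ≤ K + (γ + B) / C + 1 := by linarith
      _ = γ / C + (B / C + K + 1) := by rw [add_div]; ring

end Meas

end Aux

/-- Fix `Δ ∈ (0, C)`.  There are a finite constant `a` and a
threshold `M₀` such that for every real `M ≥ M₀`, with `N = ⌈log M/(C−Δ)⌉`:
`P[S_N < log M] ≤ 1/2` and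
`(1 − P[S_N < log M])⁻¹ · Σ_{n=0}^{N−1} E[exp(−[Sₙ − log M]⁺)] ≤ (log M)/C + a`. -/
theorem stmt14 {𝒳 𝒴 : Type*} [Fintype 𝒳] [Nonempty 𝒳] [Fintype 𝒴] [Nonempty 𝒴]
    [MeasurableSpace 𝒳] [DiscreteMeasurableSpace 𝒳]
    [MeasurableSpace 𝒴] [DiscreteMeasurableSpace 𝒴]
    (pX : 𝒳 → ℝ) (hpXpos : ∀ x, 0 < pX x) (hpXsum : ∑ x, pX x = 1)
    (W : 𝒳 → 𝒴 → ℝ) (hWpos : ∀ x y, 0 < W x y) (hWsum : ∀ x, ∑ y, W x y = 1)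
    (C : ℝ) (hCdef : C = ∑ x, ∑ y, pX x * W x y * infoDen pX W x y)
    -- `P_{XY} ≠ P_X ⊗ P_Y`, equivalently `C > 0`:
    (hC : 0 < C)
    {Ω : Type*} [MeasurableSpace Ω] (μ : Measure Ω) [IsProbabilityMeasure μ]
    (X : ℕ → Ω → 𝒳) (Y : ℕ → Ω → 𝒴)
    (hXm : ∀ k, Measurable (X k)) (hYm : ∀ k, Measurable (Y k))
    -- `((X_k, Y_k))_k` is an i.i.d. sequence with law `P_{XY}`:
    (hXYindep : iIndepFun (fun k ω => (X k ω, Y k ω)) μ)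
    (hXYlaw : ∀ k x y, μ {ω | X k ω = x ∧ Y k ω = y} = ENNReal.ofReal (pX x * W x y))
    (Δ : ℝ) (hΔpos : 0 < Δ) (hΔC : Δ < C) :
    ∃ a M₀ : ℝ, ∀ M : ℝ, M₀ ≤ M →
      (μ {ω | (∑ k ∈ Finset.range ⌈Real.log M / (C - Δ)⌉₊,
            infoDen pX W (X k ω) (Y k ω)) < Real.log M}).toReal ≤ 1 / 2
      ∧ (1 - (μ {ω | (∑ k ∈ Finset.range ⌈Real.log M / (C - Δ)⌉₊,
            infoDen pX W (X k ω) (Y k ω)) < Real.log M}).toReal)⁻¹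
          * ∑ n ∈ Finset.range ⌈Real.log M / (C - Δ)⌉₊,
              (∫ ω, Real.exp (-(max ((∑ k ∈ Finset.range n,
                infoDen pX W (X k ω) (Y k ω)) - Real.log M) 0)) ∂μ)
        ≤ Real.log M / C + a := by
  classical
  obtain ⟨a, M₀, h⟩ := core (P := 𝒳 × 𝒴) (Ω := Ω) (μ := μ)
      (fun p => pX p.1 * W p.1 p.2) (fun p => infoDen pX W p.1 p.2)
      (fun k ω => (X k ω, Y k ω))
      (fun k => (hXm k).prodMk (hYm k))
      hXYindep
      (by intro k p
          have hset : (fun ω => (X k ω, Y k ω)) ⁻¹' {p} = {ω | X k ω = p.1 ∧ Y k ω = p.2} := by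
            ext ω; simp [Prod.ext_iff]
          rw [hset]; exact hXYlaw k p.1 p.2)
      (fun p => mul_pos (hpXpos _) (hWpos _ _))
      (by rw [Fintype.sum_prod_type]
          calc ∑ x, ∑ y, pX x * W x y = ∑ x, pX x :=
                Finset.sum_congr rfl fun x _ => by rw [← Finset.mul_sum, hWsum x, mul_one]
            _ = 1 := hpXsum)
      C hC
      (by rw [Fintype.sum_prod_type]; exact hCdef.symm)
      Δ hΔpos hΔC
  exact ⟨a, M₀, fun M hM => h M hM⟩
end

section
/- For the binary symmetric channel with crossover probability p ∈ (0, 1/2) and uniform input distribution: for every n ≥ 1 and every real M ≥ 1, E[min{1, M · g((X_1,…,X_n),(Y_1,…,Y_n))}] ≤ Σ_{t=0}^{n} C(n,t) p^t (1−p)^{n−t} · min{1, M · 2^{−n} Σ_{j=0}^{t} C(n,j)}, where C(n,t) denotes the binomial coefficient and g(x^n, y^n) = 2^{−n} · #{x̄^n ∈ {0,1}^n : i(x̄^n; y^n) ≥ i(x^n; y^n)} with i(x^n;y^n) = Σ_{k=1}^n i(x_k;y_k). -/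
open MeasureTheory ProbabilityTheory
open scoped Classical

/-- Information density of the binary symmetric channel with crossover probability `p`
and uniform input (the output marginal is uniform): `i(x;y) = log(W(y|x)/(1/2))`. -/
noncomputable def bscInfoDen (p : ℝ) (x y : Bool) : ℝ :=
  Real.log ((if y = x then 1 - p else p) / (1 / 2 : ℝ))

/-- Bijection between bit strings and their disagreement set with a fixed string `y`. -/
def bscErrEquiv {n : ℕ} (y : Fin n → Bool) : (Fin n → Bool) ≃ Finset (Fin n) where
  toFun a := Finset.univ.filter fun k => ¬ (y k = a k)
  invFun s := fun k => if k ∈ s then !(y k) else y k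
  left_inv a := by
    funext k
    by_cases h : y k = a k
    · simp [Finset.mem_filter, h]
    · simp only [Finset.mem_filter, Finset.mem_univ, true_and, h, not_false_iff, if_true]
      revert h; cases y k <;> cases a k <;> simp
  right_inv s := by
    ext k
    simp only [Finset.mem_filter, Finset.mem_univ, true_and]
    by_cases h : k ∈ s
    · simp only [h, if_true, iff_true]; cases y k <;> simp
    · simp [h]

lemma bsc_sum_boolfun {n : ℕ} (y : Fin n → Bool) (f : ℕ → ℝ) :
    ∑ a : Fin n → Bool, f ((Finset.univ.filter fun k => ¬ (y k = a k)).card)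
      = ∑ t ∈ Finset.range (n + 1), (n.choose t : ℝ) * f t := by
  have h1 : ∑ a : Fin n → Bool, f ((Finset.univ.filter fun k => ¬ (y k = a k)).card)
      = ∑ s : Finset (Fin n), f s.card :=
    Fintype.sum_equiv (bscErrEquiv y) _ _ fun a => rfl
  have h2 : (Finset.univ : Finset (Finset (Fin n))) = (Finset.univ : Finset (Fin n)).powerset :=
    (Finset.powerset_univ).symm
  rw [h1, h2, Finset.sum_powerset_apply_card]
  simp [Finset.card_univ, nsmul_eq_mul]

lemma bsc_sum_infoDen {n : ℕ} (p : ℝ) (y a : Fin n → Bool) :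
    ∑ k : Fin n, bscInfoDen p (a k) (y k)
      = n * Real.log ((1 - p) / (1 / 2 : ℝ))
        + ((Finset.univ.filter fun k => ¬ (y k = a k)).card : ℝ)
          * (Real.log (p / (1 / 2 : ℝ)) - Real.log ((1 - p) / (1 / 2 : ℝ))) := by
  set L1 := Real.log ((1 - p) / (1 / 2 : ℝ))
  set L0 := Real.log (p / (1 / 2 : ℝ))
  have hterm : ∀ k : Fin n, bscInfoDen p (a k) (y k)
      = L1 + (if ¬ (y k = a k) then L0 - L1 else 0) := by
    intro k
    by_cases h : y k = a k <;> simp [bscInfoDen, h, L1, L0]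
  rw [Finset.sum_congr rfl fun k _ => hterm k, Finset.sum_add_distrib, Finset.sum_const,
    ← Finset.sum_filter, Finset.sum_const]
  simp [Finset.card_univ, nsmul_eq_mul, mul_comm]

lemma bsc_infoDen_le_iff {n : ℕ} {p : ℝ} (hp0 : 0 < p) (hp : p < 1 / 2) (y x a : Fin n → Bool) :
    ((∑ k : Fin n, bscInfoDen p (x k) (y k)) ≤ ∑ k : Fin n, bscInfoDen p (a k) (y k))
      ↔ (Finset.univ.filter fun k => ¬ (y k = a k)).card
          ≤ (Finset.univ.filter fun k => ¬ (y k = x k)).card := by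
  have hΔ : Real.log (p / (1 / 2 : ℝ)) - Real.log ((1 - p) / (1 / 2 : ℝ)) < 0 := by
    have h1 : p / (1 / 2 : ℝ) < (1 - p) / (1 / 2 : ℝ) :=
      (div_lt_div_iff_of_pos_right (by norm_num)).2 (by linarith)
    have := Real.log_lt_log (by positivity) h1
    linarith
  rw [bsc_sum_infoDen, bsc_sum_infoDen, add_le_add_iff_left,
    mul_le_mul_right_of_neg hΔ, Nat.cast_le]

lemma bsc_atom_measure {Ω : Type*} [MeasurableSpace Ω] (μ : Measure Ω) [IsProbabilityMeasure μ]
    (p : ℝ) (X Y : ℕ → Ω → Bool)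
    (hXYindep : iIndepFun (fun k ω => (X k ω, Y k ω)) μ)
    (hXYlaw : ∀ k (x y : Bool), μ {ω | X k ω = x ∧ Y k ω = y}
        = ENNReal.ofReal ((1 / 2 : ℝ) * (if y = x then 1 - p else p)))
    (n : ℕ) (q : (Fin n → Bool) × (Fin n → Bool)) :
    μ {ω | ∀ k : Fin n, X k.1 ω = q.1 k ∧ Y k.1 ω = q.2 k}
      = ∏ k : Fin n, ENNReal.ofReal ((1 / 2 : ℝ) * (if q.2 k = q.1 k then 1 - p else p)) := by
  set x' : ℕ → Bool := fun i => if h : i < n then q.1 ⟨i, h⟩ else false with hx'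
  set y' : ℕ → Bool := fun i => if h : i < n then q.2 ⟨i, h⟩ else false with hy'
  set sets : ℕ → Set (Bool × Bool) := fun i => {z | z.1 = x' i ∧ z.2 = y' i} with hsets
  have hmeas : ∀ i ∈ Finset.range n, MeasurableSet (sets i) :=
    fun i _ => (Set.to_countable _).measurableSet
  have hind := hXYindep.measure_inter_preimage_eq_mul (Finset.range n) hmeas
  have hset : {ω | ∀ k : Fin n, X k.1 ω = q.1 k ∧ Y k.1 ω = q.2 k}
      = ⋂ i ∈ Finset.range n, (fun ω => (X i ω, Y i ω)) ⁻¹' sets i := by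
    ext ω
    simp only [Set.mem_setOf_eq, Set.mem_iInter, Set.mem_preimage, Finset.mem_range, hsets]
    constructor
    · intro h i hi
      have := h ⟨i, hi⟩
      simp only [Set.mem_setOf_eq, hx', hy', dif_pos hi]
      exact this
    · intro h k
      have := h k.1 k.2
      simp only [Set.mem_setOf_eq, hx', hy', dif_pos k.2] at this
      exact this
  rw [hset, hind]
  rw [← Fin.prod_univ_eq_prod_range
    (fun i => μ ((fun ω => (X i ω, Y i ω)) ⁻¹' sets i)) n]
  apply Finset.prod_congr rfl
  intro k _
  have : (fun ω => (X k.1 ω, Y k.1 ω)) ⁻¹' sets k.1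
      = {ω | X k.1 ω = q.1 k ∧ Y k.1 ω = q.2 k} := by
    ext ω
    simp [hsets, hx', hy', dif_pos k.2]
  rw [this, hXYlaw]

/-- RCU bound for the BSC.  For the binary symmetric channel with
crossover probability `p ∈ (0, 1/2)` and uniform input: for every `n ≥ 1` and real
`M ≥ 1`,
`E[min{1, M·g(Xⁿ,Yⁿ)}] ≤ Σ_{t=0}^n C(n,t) pᵗ(1−p)^{n−t} min{1, M·2^{−n} Σ_{j=0}^t C(n,j)}`,
where `g(xⁿ,yⁿ) = 2^{−n} #{x̄ⁿ : i(x̄ⁿ;yⁿ) ≥ i(xⁿ;yⁿ)}`. -/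
theorem stmt17 (p : ℝ) (hp0 : 0 < p) (hp : p < 1 / 2)
    {Ω : Type*} [MeasurableSpace Ω] (μ : Measure Ω) [IsProbabilityMeasure μ]
    (X : ℕ → Ω → Bool) (Y : ℕ → Ω → Bool)
    (hXm : ∀ k, Measurable (X k)) (hYm : ∀ k, Measurable (Y k))
    -- `((X_k, Y_k))_k` is an i.i.d. sequence with law `P_{XY}(x,y) = P_X(x)W(y|x)`:
    (hXYindep : iIndepFun (fun k ω => (X k ω, Y k ω)) μ)
    (hXYlaw : ∀ k (x y : Bool), μ {ω | X k ω = x ∧ Y k ω = y}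
        = ENNReal.ofReal ((1 / 2 : ℝ) * (if y = x then 1 - p else p)))
    (n : ℕ) (hn : 1 ≤ n) (M : ℝ) (hM : 1 ≤ M) :
    ∫ ω, min 1 (M * (((2 : ℝ) ^ n)⁻¹ *
        ∑ xbar : Fin n → Bool, (if (∑ k : Fin n, bscInfoDen p (X k.1 ω) (Y k.1 ω))
            ≤ ∑ k : Fin n, bscInfoDen p (xbar k) (Y k.1 ω) then (1 : ℝ) else 0))) ∂μ
      ≤ ∑ t ∈ Finset.range (n + 1),
          (n.choose t : ℝ) * p ^ t * (1 - p) ^ (n - t) *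
            min 1 (M * ((2 : ℝ) ^ n)⁻¹ * ∑ j ∈ Finset.range (t + 1), (n.choose j : ℝ)) := by
  have hp1 : p < 1 := by linarith
  set F : ℕ → ℝ := fun t =>
    min 1 (M * ((2 : ℝ) ^ n)⁻¹ * ∑ j ∈ Finset.range (t + 1), (n.choose j : ℝ)) with hF
  set d : (Fin n → Bool) → (Fin n → Bool) → ℕ :=
    fun y a => (Finset.univ.filter fun k => ¬ (y k = a k)).card with hd
  set A : (Fin n → Bool) × (Fin n → Bool) → Set Ω :=
    fun q => {ω | ∀ k : Fin n, X k.1 ω = q.1 k ∧ Y k.1 ω = q.2 k} with hA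
  have hAm : ∀ q, MeasurableSet (A q) := by
    intro q
    have : A q = ⋂ k : Fin n, ((X k.1 ⁻¹' {q.1 k}) ∩ (Y k.1 ⁻¹' {q.2 k})) := by
      ext ω; simp [hA]
    rw [this]
    exact MeasurableSet.iInter fun k =>
      ((hXm k.1 (measurableSet_singleton _)).inter (hYm k.1 (measurableSet_singleton _)))
  -- Step 1 & 2: pointwise identification of the integrand
  have hpoint : ∀ ω, min 1 (M * (((2 : ℝ) ^ n)⁻¹ *
        ∑ xbar : Fin n → Bool, (if (∑ k : Fin n, bscInfoDen p (X k.1 ω) (Y k.1 ω))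
            ≤ ∑ k : Fin n, bscInfoDen p (xbar k) (Y k.1 ω) then (1 : ℝ) else 0)))
      = ∑ q : (Fin n → Bool) × (Fin n → Bool),
          Set.indicator (A q) (fun _ => F (d q.2 q.1)) ω := by
    intro ω
    set Xv : Fin n → Bool := fun k => X k.1 ω with hXv
    set Yv : Fin n → Bool := fun k => Y k.1 ω with hYv
    have hTn : d Yv Xv ≤ n := le_trans (Finset.card_filter_le _ _) (by simp)
    have hsum : (∑ xbar : Fin n → Bool, (if (∑ k : Fin n, bscInfoDen p (X k.1 ω) (Y k.1 ω))
            ≤ ∑ k : Fin n, bscInfoDen p (xbar k) (Y k.1 ω) then (1 : ℝ) else 0))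
        = ∑ j ∈ Finset.range (d Yv Xv + 1), (n.choose j : ℝ) := by
      have h1 : ∀ xbar : Fin n → Bool,
          (if (∑ k : Fin n, bscInfoDen p (X k.1 ω) (Y k.1 ω))
            ≤ ∑ k : Fin n, bscInfoDen p (xbar k) (Y k.1 ω) then (1 : ℝ) else 0)
          = (fun t => if t ≤ d Yv Xv then (1 : ℝ) else 0)
              ((Finset.univ.filter fun k => ¬ (Yv k = xbar k)).card) := fun xbar =>
        if_congr (bsc_infoDen_le_iff hp0 hp Yv Xv xbar) rfl rfl
      have hstep : (∑ xbar : Fin n → Bool, (if (∑ k : Fin n, bscInfoDen p (X k.1 ω) (Y k.1 ω))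
            ≤ ∑ k : Fin n, bscInfoDen p (xbar k) (Y k.1 ω) then (1 : ℝ) else 0))
          = ∑ t ∈ Finset.range (n + 1),
              (n.choose t : ℝ) * (if t ≤ d Yv Xv then (1 : ℝ) else 0) :=
        (Finset.sum_congr rfl fun xbar _ => h1 xbar).trans
          (bsc_sum_boolfun Yv (fun t => if t ≤ d Yv Xv then (1 : ℝ) else 0))
      rw [hstep]
      have h2 : ∀ t, (n.choose t : ℝ) * (if t ≤ d Yv Xv then (1 : ℝ) else 0)
          = if t ≤ d Yv Xv then (n.choose t : ℝ) else 0 := by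
        intro t; by_cases h : t ≤ d Yv Xv <;> simp [h]
      rw [Finset.sum_congr rfl fun t _ => h2 t, ← Finset.sum_filter]
      congr 1
      ext t
      simp only [Finset.mem_filter, Finset.mem_range]
      omega
    rw [hsum, ← mul_assoc]
    have hmem : ∀ q : (Fin n → Bool) × (Fin n → Bool), ω ∈ A q ↔ q = (Xv, Yv) := by
      intro q
      constructor
      · intro h
        have h1 : q.1 = Xv := by funext k; exact ((h k).1).symm
        have h2 : q.2 = Yv := by funext k; exact ((h k).2).symm
        exact Prod.ext h1 h2
      · rintro rfl k; exact ⟨rfl, rfl⟩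
    have : ∑ q : (Fin n → Bool) × (Fin n → Bool),
          Set.indicator (A q) (fun _ => F (d q.2 q.1)) ω
        = ∑ q : (Fin n → Bool) × (Fin n → Bool),
            (if q = (Xv, Yv) then F (d q.2 q.1) else 0) := by
      refine Finset.sum_congr rfl fun q _ => ?_
      rw [Set.indicator_apply]
      exact if_congr (hmem q) rfl rfl
    rw [this, Finset.sum_ite_eq' Finset.univ (Xv, Yv) (fun q => F (d q.2 q.1))]
    simp [hF]
  -- Step 3: compute the integral
  have hint : (∫ ω, min 1 (M * (((2 : ℝ) ^ n)⁻¹ *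
        ∑ xbar : Fin n → Bool, (if (∑ k : Fin n, bscInfoDen p (X k.1 ω) (Y k.1 ω))
            ≤ ∑ k : Fin n, bscInfoDen p (xbar k) (Y k.1 ω) then (1 : ℝ) else 0))) ∂μ)
      = ∑ q : (Fin n → Bool) × (Fin n → Bool), (μ (A q)).toReal * F (d q.2 q.1) := by
    rw [integral_congr_ae (Filter.Eventually.of_forall hpoint),
      integral_finset_sum _ fun q _ => (integrable_const _).indicator (hAm q)]
    refine Finset.sum_congr rfl fun q _ => ?_
    rw [integral_indicator_const _ (hAm q), smul_eq_mul]
    rfl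
  rw [hint]
  -- Step 4: evaluate the sum
  have hwnn : ∀ (b : Prop) [Decidable b], (0:ℝ) ≤ (1 / 2 : ℝ) * (if b then 1 - p else p) := by
    intro b _; by_cases h : b <;> simp [h] <;> linarith
  have hmu : ∀ q : (Fin n → Bool) × (Fin n → Bool),
      (μ (A q)).toReal = (1 / 2 : ℝ) ^ n * ((1 - p) ^ (n - d q.2 q.1) * p ^ (d q.2 q.1)) := by
    intro q
    rw [hA, bsc_atom_measure μ p X Y hXYindep hXYlaw n q, ENNReal.toReal_prod]
    have h1 : ∀ k : Fin n, (ENNReal.ofReal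
        ((1 / 2 : ℝ) * (if q.2 k = q.1 k then 1 - p else p))).toReal
        = (1 / 2 : ℝ) * (if q.2 k = q.1 k then 1 - p else p) := fun k =>
      ENNReal.toReal_ofReal (hwnn _)
    rw [Finset.prod_congr rfl fun k _ => h1 k, Finset.prod_mul_distrib, Finset.prod_const,
      Finset.prod_ite (fun _ => (1 - p)) (fun _ => p), Finset.prod_const, Finset.prod_const,
      Finset.card_univ]
    have hdn : d q.2 q.1 = n - (Finset.univ.filter fun k => q.2 k = q.1 k).card := by
      have hf := Finset.filter_not (fun k => q.2 k = q.1 k) (Finset.univ : Finset (Fin n))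
      simp only [hd]
      rw [hf, Finset.card_sdiff_of_subset (Finset.filter_subset _ _)]
      simp
    have h5 : (Finset.univ.filter fun k => q.2 k = q.1 k).card ≤ n :=
      le_trans (Finset.card_filter_le _ _) (by simp)
    have h4 : (Finset.univ.filter fun k => q.2 k = q.1 k).card = n - d q.2 q.1 := by omega
    rw [h4]
    simp [Fintype.card_fin, hd]
  have hcard : Fintype.card (Fin n → Bool) = 2 ^ n := by simp
  have hinner : ∀ y : Fin n → Bool,
      (∑ x : Fin n → Bool, (1 / 2 : ℝ) ^ n * ((1 - p) ^ (n - d y x) * p ^ (d y x)) * F (d y x))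
      = ∑ t ∈ Finset.range (n + 1),
          (n.choose t : ℝ) * ((1 / 2 : ℝ) ^ n * ((1 - p) ^ (n - t) * p ^ t) * F t) :=
    fun y => bsc_sum_boolfun y (fun t => (1 / 2 : ℝ) ^ n * ((1 - p) ^ (n - t) * p ^ t) * F t)
  have h2n : (2 : ℝ) ^ n * (1 / 2 : ℝ) ^ n = 1 := by
    rw [← mul_pow]; norm_num
  apply le_of_eq
  calc ∑ q : (Fin n → Bool) × (Fin n → Bool), (μ (A q)).toReal * F (d q.2 q.1)
      = ∑ x : Fin n → Bool, ∑ y : Fin n → Bool,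
          (1 / 2 : ℝ) ^ n * ((1 - p) ^ (n - d y x) * p ^ (d y x)) * F (d y x) :=
        (Fintype.sum_prod_type _).trans
          (Finset.sum_congr rfl fun x _ => Finset.sum_congr rfl fun y _ => by
            have := hmu (x, y); exact congrArg (· * F (d y x)) this)
    _ = ∑ y : Fin n → Bool, ∑ x : Fin n → Bool,
          (1 / 2 : ℝ) ^ n * ((1 - p) ^ (n - d y x) * p ^ (d y x)) * F (d y x) :=
        Finset.sum_comm
    _ = ∑ y : Fin n → Bool, ∑ t ∈ Finset.range (n + 1),
          (n.choose t : ℝ) * ((1 / 2 : ℝ) ^ n * ((1 - p) ^ (n - t) * p ^ t) * F t) :=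
        Finset.sum_congr rfl fun y _ => hinner y
    _ = (2 : ℝ) ^ n * ∑ t ∈ Finset.range (n + 1),
          (n.choose t : ℝ) * ((1 / 2 : ℝ) ^ n * ((1 - p) ^ (n - t) * p ^ t) * F t) := by
        rw [Finset.sum_const, Finset.card_univ, hcard, nsmul_eq_mul, Nat.cast_pow,
          Nat.cast_ofNat]
    _ = ∑ t ∈ Finset.range (n + 1),
          (n.choose t : ℝ) * p ^ t * (1 - p) ^ (n - t) * F t := by
        rw [Finset.mul_sum]
        refine Finset.sum_congr rfl fun t _ => ?_
        calc (2 : ℝ) ^ n * ((n.choose t : ℝ) * ((1 / 2 : ℝ) ^ n * ((1 - p) ^ (n - t) * p ^ t) * F t))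
            = ((2 : ℝ) ^ n * (1 / 2 : ℝ) ^ n)
                * ((n.choose t : ℝ) * ((1 - p) ^ (n - t) * p ^ t) * F t) := by ring
          _ = (n.choose t : ℝ) * p ^ t * (1 - p) ^ (n - t) * F t := by rw [h2n]; ring
end
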